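/- arXiv:1203.1435 — 3 statements merged into one kernel-verified Lean document; each statement's English description precedes it below -/
import Mathlib

section
/- (Maximum entropy characterization of generalized q-Gaussians.) Let α ∈ (0,∞) and q > n/(n+α). Among all probability densities f on ℝ^n with a given elliptic moment m_α[f] = m < ∞ and finite Rényi entropy power, one has N_q[f] ≤ N_q[G_γ], where γ > 0 is chosen so that m_α[G_γ] = m. -/
open MeasureTheory Real Filter
open scoped ENNReal Topology NNReal

noncomputable section

/-- The information generating function `M_q[f] = ∫ f(x)^q dx`. -/
def igf (n : ℕ) (q : ℝ) (f : EuclideanSpace ℝ (Fin n) → ℝ) : ℝ :=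
  ∫ x : EuclideanSpace ℝ (Fin n), f x ^ q

/-- The elliptic moment of order `α`, `m_α[f] = ∫ ‖x‖^α f(x) dx`. -/
def ellMoment (n : ℕ) (α : ℝ) (f : EuclideanSpace ℝ (Fin n) → ℝ) : ℝ :=
  ∫ x : EuclideanSpace ℝ (Fin n), ‖x‖ ^ α * f x

/-- The generalized `(β,q)`-Fisher information
`I_{β,q}[f] = ∫ f(x)^{β(q-1)+1} (‖∇f(x)‖ / f(x))^β dx`. -/
def genFisher (n : ℕ) (β q : ℝ) (f : EuclideanSpace ℝ (Fin n) → ℝ) : ℝ :=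
  ∫ x : EuclideanSpace ℝ (Fin n), f x ^ (β * (q - 1) + 1) * (‖fderiv ℝ f x‖ / f x) ^ β

/-- The unnormalized generalized `q`-Gaussian:
`(1 - (q-1) γ ‖x‖^α)_+ ^ (1/(q-1))` for `q ≠ 1` and `exp (-γ ‖x‖^α)` for `q = 1`. -/
def qGaussKernel (n : ℕ) (α q γ : ℝ) (x : EuclideanSpace ℝ (Fin n)) : ℝ :=
  if q = 1 then Real.exp (-(γ * ‖x‖ ^ α))
  else (max (1 - (q - 1) * γ * ‖x‖ ^ α) 0) ^ ((1 : ℝ) / (q - 1))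

/-- Partition function `Z(γ)` of the generalized `q`-Gaussian. -/
def Zpart (n : ℕ) (α q γ : ℝ) : ℝ :=
  ∫ x : EuclideanSpace ℝ (Fin n), qGaussKernel n α q γ x

/-- The generalized `q`-Gaussian density `G_γ` on `ℝ^n`. -/
def qGaussian (n : ℕ) (α q γ : ℝ) (x : EuclideanSpace ℝ (Fin n)) : ℝ :=
  qGaussKernel n α q γ x / Zpart n α q γ

/-- The Rényi entropy power of order `q`:
`N_q[f] = M_q[f]^{1/(1-q)}` for `q ≠ 1`, and `N_1[f] = exp(-∫ f log f)`. -/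
def entPower (n : ℕ) (q : ℝ) (f : EuclideanSpace ℝ (Fin n) → ℝ) : ℝ :=
  if q = 1 then Real.exp (-∫ x : EuclideanSpace ℝ (Fin n), f x * Real.log (f x))
  else igf n q f ^ ((1 : ℝ) / (1 - q))

lemma aux_integrable_of_bound {n : ℕ} {g : EuclideanSpace ℝ (Fin n) → ℝ}
    (hg : AEStronglyMeasurable g volume) (C r : ℝ) (hr : (n : ℝ) < r)
    (hb : ∀ x, ‖g x‖ ≤ C * (1 + ‖x‖) ^ (-r)) : Integrable g := by
  have h1 : Integrable (fun x : EuclideanSpace ℝ (Fin n) => C * (1 + ‖x‖) ^ (-r)) := by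
    apply Integrable.const_mul
    apply integrable_one_add_norm
    rwa [finrank_euclideanSpace_fin]
  exact h1.mono' hg (Filter.Eventually.of_forall hb)

lemma qgk_nonneg (n : ℕ) (α q γ : ℝ) (x : EuclideanSpace ℝ (Fin n)) :
    0 ≤ qGaussKernel n α q γ x := by
  unfold qGaussKernel
  split_ifs
  · exact (Real.exp_pos _).le
  · exact Real.rpow_nonneg (le_max_right _ _) _

lemma qgk_meas (n : ℕ) (α q γ : ℝ) : Measurable (qGaussKernel n α q γ) := by
  unfold qGaussKernel
  split_ifs
  · fun_prop
  · fun_prop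

/-- Kernel formula for `q < 1`. -/
lemma qgk_eq_of_lt_one {n : ℕ} {α q γ : ℝ} (hγ : 0 < γ) (hq1 : q < 1)
    (x : EuclideanSpace ℝ (Fin n)) :
    qGaussKernel n α q γ x = (1 + (1 - q) * γ * ‖x‖ ^ α) ^ (-((1:ℝ) / (1 - q))) := by
  have hb : (0:ℝ) ≤ (1 - q) * γ * ‖x‖ ^ α :=
    mul_nonneg (mul_nonneg (by linarith) hγ.le) (Real.rpow_nonneg (norm_nonneg _) _)
  unfold qGaussKernel
  rw [if_neg (by linarith : q ≠ 1)]
  have h1 : 1 - (q - 1) * γ * ‖x‖ ^ α = 1 + (1 - q) * γ * ‖x‖ ^ α := by ring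
  have h2 : (1:ℝ) / (q - 1) = -(1 / (1 - q)) := by
    rw [show q - 1 = -(1 - q) by ring, div_neg]
  rw [h1, h2, max_eq_left (by linarith : (0:ℝ) ≤ 1 + (1 - q) * γ * ‖x‖ ^ α)]


/-- `(1+t)^α ≤ 2^α * (1 + t^α)` for `t ≥ 0`, `α ≥ 0`. -/
lemma one_add_rpow_le {t α : ℝ} (ht : 0 ≤ t) (hα : 0 ≤ α) :
    (1 + t) ^ α ≤ 2 ^ α * (1 + t ^ α) := by
  rcases le_total t 1 with h | h
  · calc (1 + t) ^ α ≤ 2 ^ α := Real.rpow_le_rpow (by linarith) (by linarith) hα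
      _ ≤ 2 ^ α * (1 + t ^ α) := by
          nlinarith [Real.rpow_nonneg ht α, Real.rpow_nonneg (by norm_num : (0:ℝ) ≤ 2) α]
  · calc (1 + t) ^ α ≤ (2 * t) ^ α := Real.rpow_le_rpow (by linarith) (by linarith) hα
      _ = 2 ^ α * t ^ α := Real.mul_rpow (by norm_num) ht
      _ ≤ 2 ^ α * (1 + t ^ α) := by
          nlinarith [Real.rpow_nonneg (by norm_num : (0:ℝ) ≤ 2) α, Real.rpow_nonneg ht α]

/-- `u^k/k! ≤ exp u` for `u ≥ 0`. -/
lemma pow_div_factorial_le_exp {u : ℝ} (hu : 0 ≤ u) (k : ℕ) :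
    u ^ k / k.factorial ≤ Real.exp u := by
  have h := Real.sum_le_exp_of_nonneg hu (k + 1)
  refine le_trans ?_ h
  exact Finset.single_le_sum (f := fun i => u ^ i / (i.factorial : ℝ))
    (fun i _ => by positivity) (Finset.self_mem_range_succ k)

set_option maxHeartbeats 1000000 in
/-- Master integrability lemma for powers against the kernel. -/
lemma qgk_integrable_aux {n : ℕ} {α q γ : ℝ} (hn : 0 < n) (hα : 0 < α) (hγ : 0 < γ)
    (hq : (n : ℝ) / ((n : ℝ) + α) < q) (β δ : ℝ) (hβ : 0 ≤ β) (hδ : 0 < δ)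
    (hδ1 : q = 1 → δ = 1)
    (hcond : q < 1 → (n : ℝ) < α * δ / (1 - q) - β) :
    Integrable (fun x : EuclideanSpace ℝ (Fin n) => ‖x‖ ^ β * qGaussKernel n α q γ x ^ δ) := by
  have hq0 : 0 < q := lt_trans (by positivity) hq
  have hmeas : AEStronglyMeasurable
      (fun x : EuclideanSpace ℝ (Fin n) => ‖x‖ ^ β * qGaussKernel n α q γ x ^ δ) volume := by
    apply Measurable.aestronglyMeasurable
    have hK := qgk_meas n α q γ
    fun_prop
  rcases lt_trichotomy q 1 with hq1 | hq1 | hq1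
  · -- q < 1
    set c : ℝ := (1 - q) * γ with hc
    have hcpos : 0 < c := mul_pos (by linarith) hγ
    set d : ℝ := min c 1 with hd
    have hdpos : 0 < d := lt_min hcpos one_pos
    set e : ℝ := δ / (1 - q) with he
    have hepos : 0 < e := div_pos hδ (by linarith)
    set r : ℝ := α * e - β with hr
    have hnr : (n : ℝ) < r := by
      have h := hcond hq1
      rw [mul_div_assoc] at h
      rw [hr, he]; linarith
    apply aux_integrable_of_bound hmeas ((d * 2 ^ (-α)) ^ (-e)) r hnr
    intro x
    set t : ℝ := ‖x‖ with ht
    have ht0 : (0:ℝ) ≤ t := norm_nonneg _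
    have htp : (0:ℝ) < 1 + t := by linarith
    -- kernel value
    have hKx : qGaussKernel n α q γ x = (1 + c * t ^ α) ^ (-((1:ℝ) / (1 - q))) :=
      qgk_eq_of_lt_one hγ hq1 x
    have hbase : (0:ℝ) < 1 + c * t ^ α := by
      have : 0 ≤ c * t ^ α := mul_nonneg hcpos.le (Real.rpow_nonneg ht0 _)
      linarith
    have hKδ : qGaussKernel n α q γ x ^ δ = (1 + c * t ^ α) ^ (-e) := by
      rw [hKx, ← Real.rpow_mul hbase.le]
      congr 1
      rw [he, neg_mul, one_div, inv_mul_eq_div]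
    have h2a : 2 ^ (-α) * (1 + t) ^ α ≤ 1 + t ^ α := by
      have h := one_add_rpow_le ht0 hα.le
      have h2 : (0:ℝ) < 2 ^ (-α) := Real.rpow_pos_of_pos two_pos _
      have h3 : (2:ℝ) ^ (-α) * 2 ^ α = 1 := by
        rw [← Real.rpow_add two_pos]; simp
      calc 2 ^ (-α) * (1 + t) ^ α ≤ 2 ^ (-α) * (2 ^ α * (1 + t ^ α)) :=
            mul_le_mul_of_nonneg_left h h2.le
        _ = 1 + t ^ α := by rw [← mul_assoc, h3, one_mul]
    have hbase_ge : d * (2 ^ (-α) * (1 + t) ^ α) ≤ 1 + c * t ^ α := by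
      have hd1 : d ≤ 1 := min_le_right _ _
      have hdc : d ≤ c := min_le_left _ _
      have htα : (0:ℝ) ≤ t ^ α := Real.rpow_nonneg ht0 _
      calc d * (2 ^ (-α) * (1 + t) ^ α) ≤ d * (1 + t ^ α) :=
            mul_le_mul_of_nonneg_left h2a hdpos.le
        _ = d + d * t ^ α := by ring
        _ ≤ 1 + c * t ^ α := by nlinarith
    have hDpos : (0:ℝ) < d * (2 ^ (-α) * (1 + t) ^ α) := by positivity
    have hKle : qGaussKernel n α q γ x ^ δ ≤ (d * 2 ^ (-α)) ^ (-e) * (1 + t) ^ (-(α * e)) := by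
      rw [hKδ]
      calc (1 + c * t ^ α) ^ (-e) ≤ (d * (2 ^ (-α) * (1 + t) ^ α)) ^ (-e) :=
            Real.rpow_le_rpow_of_nonpos hDpos hbase_ge (neg_nonpos.mpr hepos.le)
        _ = (d * 2 ^ (-α)) ^ (-e) * (1 + t) ^ (-(α * e)) := by
            rw [← mul_assoc, Real.mul_rpow (by positivity) (Real.rpow_nonneg htp.le _),
              ← Real.rpow_mul htp.le, mul_neg]
    have hβle : t ^ β ≤ (1 + t) ^ β := Real.rpow_le_rpow ht0 (by linarith) hβ
    rw [Real.norm_eq_abs, abs_of_nonneg (mul_nonneg (Real.rpow_nonneg ht0 _)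
      (Real.rpow_nonneg (qgk_nonneg n α q γ x) _))]
    calc t ^ β * qGaussKernel n α q γ x ^ δ
        ≤ (1 + t) ^ β * ((d * 2 ^ (-α)) ^ (-e) * (1 + t) ^ (-(α * e))) :=
          mul_le_mul hβle hKle (Real.rpow_nonneg (qgk_nonneg n α q γ x) δ)
            (Real.rpow_nonneg htp.le β)
      _ = (d * 2 ^ (-α)) ^ (-e) * ((1 + t) ^ β * (1 + t) ^ (-(α * e))) := by ring
      _ = (d * 2 ^ (-α)) ^ (-e) * (1 + t) ^ (-r) := by
          rw [← Real.rpow_add htp]; congr 1; rw [hr]; ring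
  · -- q = 1
    subst hq1
    have hδe : δ = 1 := hδ1 rfl
    subst hδe
    have hker : ∀ x : EuclideanSpace ℝ (Fin n),
        qGaussKernel n α 1 γ x = Real.exp (-(γ * ‖x‖ ^ α)) := by
      intro x; unfold qGaussKernel; rw [if_pos rfl]
    set k : ℕ := ⌈(β + n + 1) / α⌉₊ with hk
    have hkα : β + (n:ℝ) + 1 ≤ α * k := by
      have h1 : (β + n + 1) / α ≤ (k:ℝ) := Nat.le_ceil _
      calc β + (n:ℝ) + 1 = ((β + n + 1) / α) * α := by field_simp
        _ ≤ (k:ℝ) * α := mul_le_mul_of_nonneg_right h1 hα.le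
        _ = α * k := by ring
    set C : ℝ := 2 ^ ((n:ℝ) + 1) * max 1 (k.factorial / γ ^ k) with hC
    apply aux_integrable_of_bound hmeas C ((n:ℝ) + 1) (by linarith)
    intro x
    set t : ℝ := ‖x‖ with ht
    have ht0 : (0:ℝ) ≤ t := norm_nonneg _
    have htp : (0:ℝ) < 1 + t := by linarith
    have hmax1 : (1:ℝ) ≤ max 1 ((k.factorial : ℝ) / γ ^ k) := le_max_left _ _
    have hmax0 : (0:ℝ) ≤ max 1 ((k.factorial : ℝ) / γ ^ k) := by linarith
    have hP : (0:ℝ) < 2 ^ ((n:ℝ) + 1) := Real.rpow_pos_of_pos two_pos _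
    have hPinv : (0:ℝ) < 2 ^ (-((n:ℝ) + 1)) := Real.rpow_pos_of_pos two_pos _
    have hPP : (2:ℝ) ^ ((n:ℝ) + 1) * 2 ^ (-((n:ℝ) + 1)) = 1 := by
      rw [← Real.rpow_add two_pos, add_neg_cancel, Real.rpow_zero]
    rw [Real.norm_eq_abs, abs_of_nonneg (mul_nonneg (Real.rpow_nonneg ht0 _)
      (Real.rpow_nonneg (qgk_nonneg n α 1 γ x) _)), hker x, Real.rpow_one]
    rcases le_total t 1 with h | h
    · have hL1 : t ^ β ≤ 1 := Real.rpow_le_one ht0 h hβ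
      have hL2 : Real.exp (-(γ * t ^ α)) ≤ 1 := by
        rw [Real.exp_le_one_iff]
        have : (0:ℝ) ≤ γ * t ^ α := by positivity
        linarith
      have hR1 : (2:ℝ) ^ (-((n:ℝ) + 1)) ≤ (1 + t) ^ (-((n:ℝ) + 1)) :=
        Real.rpow_le_rpow_of_nonpos htp (by linarith) (neg_nonpos.mpr (by positivity))
      have hexp0 : (0:ℝ) < Real.exp (-(γ * t ^ α)) := Real.exp_pos _
      have htβ0 : (0:ℝ) ≤ t ^ β := Real.rpow_nonneg ht0 _
      calc t ^ β * Real.exp (-(γ * t ^ α)) ≤ 1 := by nlinarith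
        _ = 2 ^ ((n:ℝ) + 1) * 2 ^ (-((n:ℝ) + 1)) := hPP.symm
        _ ≤ C * (1 + t) ^ (-((n:ℝ) + 1)) := by
            rw [hC]
            have h1 : (2:ℝ) ^ ((n:ℝ) + 1) ≤ 2 ^ ((n:ℝ) + 1) * max 1 ((k.factorial : ℝ) / γ ^ k) := by
              nlinarith
            have h2 : (0:ℝ) ≤ (1 + t) ^ (-((n:ℝ) + 1)) := Real.rpow_nonneg htp.le _
            exact mul_le_mul h1 hR1 hPinv.le (by positivity)
    · have htpos : (0:ℝ) < t := by linarith
      have hu : (0:ℝ) ≤ γ * t ^ α := by positivity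
      have htαk : (γ * t ^ α) ^ k = γ ^ k * t ^ (α * k) := by
        rw [mul_pow, ← Real.rpow_natCast (t ^ α) k, ← Real.rpow_mul ht0]
      have hpk : (0:ℝ) < γ ^ k * t ^ (α * k) := by positivity
      have hexp : Real.exp (-(γ * t ^ α)) ≤ (k.factorial : ℝ) / γ ^ k * t ^ (-(α * k)) := by
        have h1 : (γ * t ^ α) ^ k / (k.factorial : ℝ) ≤ Real.exp (γ * t ^ α) :=
          pow_div_factorial_le_exp hu k
        have h2 : γ ^ k * t ^ (α * k) / (k.factorial : ℝ) ≤ Real.exp (γ * t ^ α) := by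
          rw [← htαk]; exact h1
        have hfac : (0:ℝ) < (k.factorial : ℝ) := by positivity
        rw [Real.exp_neg]
        calc (Real.exp (γ * t ^ α))⁻¹ ≤ (γ ^ k * t ^ (α * k) / (k.factorial : ℝ))⁻¹ :=
              inv_anti₀ (by positivity) h2
          _ = (k.factorial : ℝ) / (γ ^ k * t ^ (α * k)) := by rw [inv_div]
          _ = (k.factorial : ℝ) / γ ^ k * t ^ (-(α * k)) := by
              rw [Real.rpow_neg ht0, ← div_div, div_eq_mul_inv]
      have hcomb : t ^ β * Real.exp (-(γ * t ^ α)) ≤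
          ((k.factorial : ℝ) / γ ^ k) * t ^ (-((n:ℝ) + 1)) := by
        have h1 : t ^ β * Real.exp (-(γ * t ^ α)) ≤
            t ^ β * ((k.factorial : ℝ) / γ ^ k * t ^ (-(α * k))) :=
          mul_le_mul_of_nonneg_left hexp (Real.rpow_nonneg ht0 _)
        have h2 : t ^ β * t ^ (-(α * k)) = t ^ (β - α * k) := by
          rw [← Real.rpow_add htpos]; ring_nf
        have h3 : t ^ (β - α * k) ≤ t ^ (-((n:ℝ) + 1)) :=
          Real.rpow_le_rpow_of_exponent_le h (by linarith)
        calc t ^ β * Real.exp (-(γ * t ^ α))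
            ≤ t ^ β * ((k.factorial : ℝ) / γ ^ k * t ^ (-(α * k))) := h1
          _ = ((k.factorial : ℝ) / γ ^ k) * (t ^ β * t ^ (-(α * k))) := by ring
          _ = ((k.factorial : ℝ) / γ ^ k) * t ^ (β - α * k) := by rw [h2]
          _ ≤ ((k.factorial : ℝ) / γ ^ k) * t ^ (-((n:ℝ) + 1)) := by
              apply mul_le_mul_of_nonneg_left h3 (by positivity)
      have htr : t ^ (-((n:ℝ) + 1)) ≤ 2 ^ ((n:ℝ) + 1) * (1 + t) ^ (-((n:ℝ) + 1)) := by
        have h1 : (2 * t) ^ (-((n:ℝ) + 1)) ≤ (1 + t) ^ (-((n:ℝ) + 1)) :=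
          Real.rpow_le_rpow_of_nonpos htp (by linarith) (neg_nonpos.mpr (by positivity))
        have h2 : (2 * t) ^ (-((n:ℝ) + 1)) = 2 ^ (-((n:ℝ) + 1)) * t ^ (-((n:ℝ) + 1)) :=
          Real.mul_rpow (by norm_num) ht0
        have h3 : (0:ℝ) ≤ t ^ (-((n:ℝ) + 1)) := Real.rpow_nonneg ht0 _
        nlinarith
      calc t ^ β * Real.exp (-(γ * t ^ α))
          ≤ ((k.factorial : ℝ) / γ ^ k) * t ^ (-((n:ℝ) + 1)) := hcomb
        _ ≤ max 1 ((k.factorial : ℝ) / γ ^ k) * (2 ^ ((n:ℝ) + 1) * (1 + t) ^ (-((n:ℝ) + 1))) := by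
            apply mul_le_mul (le_max_right _ _) htr (Real.rpow_nonneg ht0 _) hmax0
        _ = C * (1 + t) ^ (-((n:ℝ) + 1)) := by rw [hC]; ring
  · -- 1 < q
    set c : ℝ := (q - 1) * γ with hc
    have hcpos : 0 < c := mul_pos (by linarith) hγ
    set R : ℝ := c⁻¹ ^ α⁻¹ with hR
    have hRpos : 0 < R := Real.rpow_pos_of_pos (inv_pos.mpr hcpos) _
    have hK_le_one : ∀ x : EuclideanSpace ℝ (Fin n), qGaussKernel n α q γ x ≤ 1 := by
      intro x
      unfold qGaussKernel
      rw [if_neg (by intro h; rw [h] at hq1; exact lt_irrefl 1 hq1 : q ≠ 1)]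
      apply Real.rpow_le_one (le_max_right _ _) _ (by apply div_nonneg zero_le_one; linarith : (0:ℝ) ≤ 1/(q-1))
      apply max_le _ zero_le_one
      have h1 : (0:ℝ) ≤ (q - 1) * γ * ‖x‖ ^ α := by
        have := Real.rpow_nonneg (norm_nonneg x) α
        nlinarith
      linarith
    have hK_zero : ∀ x : EuclideanSpace ℝ (Fin n), R < ‖x‖ → qGaussKernel n α q γ x = 0 := by
      intro x hx
      unfold qGaussKernel
      rw [if_neg (by intro h; rw [h] at hq1; exact lt_irrefl 1 hq1 : q ≠ 1)]
      have h1 : c⁻¹ < ‖x‖ ^ α := by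
        have h2 := Real.rpow_lt_rpow hRpos.le hx hα
        rwa [hR, ← Real.rpow_mul (inv_pos.mpr hcpos).le, inv_mul_cancel₀ hα.ne',
          Real.rpow_one] at h2
      have h3 : 1 < c * ‖x‖ ^ α := by
        have h4 := mul_lt_mul_of_pos_left h1 hcpos
        rwa [mul_inv_cancel₀ hcpos.ne'] at h4
      have h5 : 1 - (q - 1) * γ * ‖x‖ ^ α < 0 := by
        rw [hc] at h3; linarith
      rw [max_eq_right h5.le, Real.zero_rpow]
      intro h6
      rw [div_eq_zero_iff] at h6
      rcases h6 with h6 | h6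
      · exact one_ne_zero h6
      · rw [sub_eq_zero] at h6; rw [h6] at hq1; exact lt_irrefl 1 hq1
    set C : ℝ := (1 + R) ^ ((n:ℝ) + 1) * max 1 (R ^ β) with hC
    apply aux_integrable_of_bound hmeas C ((n:ℝ) + 1) (by linarith)
    intro x
    set t : ℝ := ‖x‖ with ht
    have ht0 : (0:ℝ) ≤ t := norm_nonneg _
    have htp : (0:ℝ) < 1 + t := by linarith
    rw [Real.norm_eq_abs, abs_of_nonneg (mul_nonneg (Real.rpow_nonneg ht0 _)
      (Real.rpow_nonneg (qgk_nonneg n α q γ x) _))]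
    rcases le_or_gt t R with h | h
    · have hL1 : t ^ β ≤ max 1 (R ^ β) :=
        le_trans (Real.rpow_le_rpow ht0 h hβ) (le_max_right _ _)
      have hL2 : qGaussKernel n α q γ x ^ δ ≤ 1 :=
        Real.rpow_le_one (qgk_nonneg n α q γ x) (hK_le_one x) hδ.le
      have hmax0 : (0:ℝ) ≤ max 1 (R ^ β) := le_trans zero_le_one (le_max_left _ _)
      have hR1 : (1 + R) ^ (-((n:ℝ) + 1)) ≤ (1 + t) ^ (-((n:ℝ) + 1)) :=
        Real.rpow_le_rpow_of_nonpos htp (by linarith) (neg_nonpos.mpr (by positivity))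
      have hRP : (0:ℝ) < (1 + R) ^ ((n:ℝ) + 1) := Real.rpow_pos_of_pos (by linarith) _
      have hRPP : (1 + R) ^ ((n:ℝ) + 1) * (1 + R) ^ (-((n:ℝ) + 1)) = 1 := by
        rw [← Real.rpow_add (by linarith : (0:ℝ) < 1 + R), add_neg_cancel, Real.rpow_zero]
      calc t ^ β * qGaussKernel n α q γ x ^ δ ≤ max 1 (R ^ β) * 1 := by
            apply mul_le_mul hL1 hL2 (Real.rpow_nonneg (qgk_nonneg n α q γ x) _) hmax0
        _ = max 1 (R ^ β) * ((1 + R) ^ ((n:ℝ) + 1) * (1 + R) ^ (-((n:ℝ) + 1))) := by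
            rw [hRPP]
        _ ≤ max 1 (R ^ β) * ((1 + R) ^ ((n:ℝ) + 1) * (1 + t) ^ (-((n:ℝ) + 1))) := by
            apply mul_le_mul_of_nonneg_left _ hmax0
            exact mul_le_mul_of_nonneg_left hR1 hRP.le
        _ = C * (1 + t) ^ (-((n:ℝ) + 1)) := by rw [hC]; ring
    · rw [hK_zero x h, Real.zero_rpow hδ.ne', mul_zero]
      have : (0:ℝ) < (1 + t) ^ (-((n:ℝ) + 1)) := Real.rpow_pos_of_pos htp _
      have hC0 : (0:ℝ) < C := by
        rw [hC]
        have h1 : (0:ℝ) < (1 + R) ^ ((n:ℝ) + 1) := Real.rpow_pos_of_pos (by linarith) _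
        have h2 : (0:ℝ) < max 1 (R ^ β) := lt_of_lt_of_le one_pos (le_max_left _ _)
        positivity
      positivity

/-- The kernel is positive on a small ball. -/
lemma qgk_pos_radius {n : ℕ} {α q γ : ℝ} (hα : 0 < α) (hγ : 0 < γ) :
    ∃ r : ℝ, 0 < r ∧ ∀ x : EuclideanSpace ℝ (Fin n), ‖x‖ < r → 0 < qGaussKernel n α q γ x := by
  by_cases hq1 : q = 1
  · refine ⟨1, one_pos, fun x _ => ?_⟩
    unfold qGaussKernel; rw [if_pos hq1]; exact Real.exp_pos _
  rcases le_or_gt q 1 with hle | hlt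
  · refine ⟨1, one_pos, fun x _ => ?_⟩
    unfold qGaussKernel; rw [if_neg hq1]
    apply Real.rpow_pos_of_pos
    have h1 : (q - 1) * γ * ‖x‖ ^ α ≤ 0 := by
      have h2 : (0:ℝ) ≤ γ * ‖x‖ ^ α := by positivity
      nlinarith
    have : (0:ℝ) < 1 - (q - 1) * γ * ‖x‖ ^ α := by linarith
    rw [max_eq_left this.le]; exact this
  · set c : ℝ := (q - 1) * γ with hc
    have hcpos : 0 < c := mul_pos (by linarith) hγ
    refine ⟨c⁻¹ ^ α⁻¹, Real.rpow_pos_of_pos (inv_pos.mpr hcpos) _, fun x hx => ?_⟩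
    unfold qGaussKernel; rw [if_neg hq1]
    apply Real.rpow_pos_of_pos
    have h1 : ‖x‖ ^ α < c⁻¹ := by
      have h2 := Real.rpow_lt_rpow (norm_nonneg x) hx hα
      rwa [← Real.rpow_mul (inv_pos.mpr hcpos).le, inv_mul_cancel₀ hα.ne',
        Real.rpow_one] at h2
    have h3 : c * ‖x‖ ^ α < 1 := by
      have h4 := mul_lt_mul_of_pos_left h1 hcpos
      rwa [mul_inv_cancel₀ hcpos.ne'] at h4
    have h5 : (0:ℝ) < 1 - (q - 1) * γ * ‖x‖ ^ α := by
      rw [hc] at h3; linarith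
    rw [max_eq_left h5.le]; exact h5

/-- Positivity of `∫ K^δ`. -/
lemma integral_qgk_pow_pos {n : ℕ} {α q γ : ℝ} (hn : 0 < n) (hα : 0 < α) (hγ : 0 < γ)
    (hq : (n : ℝ) / ((n : ℝ) + α) < q) (δ : ℝ) (hδ : 0 < δ) (hδ1 : q = 1 → δ = 1)
    (hcond : q < 1 → (n : ℝ) < α * δ / (1 - q)) :
    0 < ∫ x : EuclideanSpace ℝ (Fin n), qGaussKernel n α q γ x ^ δ := by
  have hint : Integrable (fun x : EuclideanSpace ℝ (Fin n) => qGaussKernel n α q γ x ^ δ) := by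
    have h := qgk_integrable_aux hn hα hγ hq 0 δ le_rfl hδ hδ1 (fun h1 => by
      have := hcond h1; linarith)
    simpa using h
  rw [integral_pos_iff_support_of_nonneg
    (fun x => Real.rpow_nonneg (qgk_nonneg n α q γ x) δ) hint]
  obtain ⟨r, hr, hpos⟩ := qgk_pos_radius (n := n) (q := q) hα hγ
  have hsub : Metric.ball (0 : EuclideanSpace ℝ (Fin n)) r ⊆
      Function.support fun x => qGaussKernel n α q γ x ^ δ := by
    intro x hx
    rw [Metric.mem_ball, dist_zero_right] at hx
    exact (Real.rpow_pos_of_pos (hpos x hx) δ).ne'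
  calc (0:ℝ≥0∞) < volume (Metric.ball (0 : EuclideanSpace ℝ (Fin n)) r) :=
        Metric.measure_ball_pos volume 0 hr
    _ ≤ volume (Function.support fun x => qGaussKernel n α q γ x ^ δ) :=
        measure_mono hsub

/-- `K^q = (1 - (q-1)γ‖x‖^α) * K` pointwise, for `q ≠ 1`, `q ≠ 0`. -/
lemma qgk_pow_q {n : ℕ} {α q γ : ℝ} (hq1 : q ≠ 1) (hq0 : q ≠ 0)
    (x : EuclideanSpace ℝ (Fin n)) :
    qGaussKernel n α q γ x ^ q = (1 - (q - 1) * γ * ‖x‖ ^ α) * qGaussKernel n α q γ x := by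
  have hqsub : q - 1 ≠ 0 := sub_ne_zero.mpr hq1
  unfold qGaussKernel
  rw [if_neg hq1]
  rcases le_or_gt (1 - (q - 1) * γ * ‖x‖ ^ α) 0 with hb | hb
  · rw [max_eq_right hb, Real.zero_rpow (one_div_ne_zero hqsub), Real.zero_rpow hq0, mul_zero]
  · rw [max_eq_left hb.le, ← Real.rpow_mul hb.le]
    have h1 : (1:ℝ) / (q - 1) * q = 1 + 1 / (q - 1) := by field_simp; ring
    rw [h1, Real.rpow_add hb, Real.rpow_one]

/-- `K^(q-1) = max (1 - (q-1)γ‖x‖^α) 0` pointwise, for `q ≠ 1`. -/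
lemma qgk_pow_qsub1 {n : ℕ} {α q γ : ℝ} (hq1 : q ≠ 1) (x : EuclideanSpace ℝ (Fin n)) :
    qGaussKernel n α q γ x ^ (q - 1) = max (1 - (q - 1) * γ * ‖x‖ ^ α) 0 := by
  have hqsub : q - 1 ≠ 0 := sub_ne_zero.mpr hq1
  unfold qGaussKernel
  rw [if_neg hq1, ← Real.rpow_mul (le_max_right _ _), one_div,
    inv_mul_cancel₀ hqsub, Real.rpow_one]


lemma tangent_le {a b q : ℝ} (ha : 0 ≤ a) (hb : 0 < b) (hq0 : 0 ≤ q) (hq1 : q ≤ 1) :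
    a ^ q ≤ b ^ q + q * b ^ (q - 1) * (a - b) := by
  have hs : -1 ≤ a / b - 1 := by
    have : 0 ≤ a / b := div_nonneg ha hb.le
    linarith
  have hbern := rpow_one_add_le_one_add_mul_self hs hq0 hq1
  rw [show 1 + (a / b - 1) = a / b by ring] at hbern
  have hbq : (0:ℝ) < b ^ q := rpow_pos_of_pos hb q
  have hdiv : (a / b) ^ q = a ^ q / b ^ q := div_rpow ha hb.le q
  have hbq1 : b ^ q = b ^ (q - 1) * b := by
    rw [← Real.rpow_add_one hb.ne' (q - 1)]; ring_nf
  have h2 : a ^ q / b ^ q ≤ 1 + q * (a / b - 1) := by rwa [hdiv] at hbern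
  have h3 : a ^ q ≤ (1 + q * (a / b - 1)) * b ^ q := by
    rw [div_le_iff₀ hbq] at h2; linarith
  calc a ^ q ≤ (1 + q * (a / b - 1)) * b ^ q := h3
    _ = b ^ q + q * b ^ (q - 1) * (a - b) := by
        rw [hbq1]; field_simp

lemma tangent_ge {a b q : ℝ} (ha : 0 ≤ a) (hb : 0 < b) (hq1 : 1 ≤ q) :
    b ^ q + q * b ^ (q - 1) * (a - b) ≤ a ^ q := by
  have hs : -1 ≤ a / b - 1 := by
    have : 0 ≤ a / b := div_nonneg ha hb.le
    linarith
  have hbern := one_add_mul_self_le_rpow_one_add hs hq1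
  rw [show 1 + (a / b - 1) = a / b by ring] at hbern
  have hbq : (0:ℝ) < b ^ q := rpow_pos_of_pos hb q
  have hdiv : (a / b) ^ q = a ^ q / b ^ q := div_rpow ha hb.le q
  have hbq1 : b ^ q = b ^ (q - 1) * b := by
    rw [← Real.rpow_add_one hb.ne' (q - 1)]; ring_nf
  have h2 : 1 + q * (a / b - 1) ≤ a ^ q / b ^ q := by rwa [hdiv] at hbern
  have h3 : (1 + q * (a / b - 1)) * b ^ q ≤ a ^ q := by
    rw [le_div_iff₀ hbq] at h2; linarith
  calc b ^ q + q * b ^ (q - 1) * (a - b) = (1 + q * (a / b - 1)) * b ^ q := by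
        rw [hbq1]; field_simp
    _ ≤ a ^ q := h3

lemma gibbs_aux {a b : ℝ} (ha : 0 ≤ a) (hb : 0 < b) :
    a * Real.log b + a - b ≤ a * Real.log a := by
  rcases eq_or_lt_of_le ha with rfl | ha'
  · simp; linarith
  · have h := Real.log_le_sub_one_of_pos (div_pos hb ha')
    rw [Real.log_div hb.ne' ha'.ne'] at h
    have h2 : a * (Real.log b - Real.log a) ≤ a * (b / a - 1) :=
      mul_le_mul_of_nonneg_left h ha'.le
    have h3 : a * (b / a - 1) = b - a := by field_simp
    nlinarith

lemma cond_base {n : ℕ} {α q : ℝ} (hn : 0 < n) (hα : 0 < α)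
    (hq : (n : ℝ) / ((n : ℝ) + α) < q) (hq1 : q < 1) : (n : ℝ) < α * q / (1 - q) := by
  have hn' : (0:ℝ) < n := by exact_mod_cast hn
  have hnα : (0:ℝ) < (n:ℝ) + α := by positivity
  rw [div_lt_iff₀ hnα] at hq
  rw [lt_div_iff₀ (by linarith : (0:ℝ) < 1 - q)]
  nlinarith


set_option maxHeartbeats 1000000 in
/-- **Maximum entropy characterization of generalized `q`-Gaussians.**
Let `α ∈ (0,∞)` and `q > n/(n+α)`. Among all probability densities `f` on `ℝ^n` with
given elliptic moment `m_α[f] = m < ∞` and finite Rényi entropy power, one has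
`N_q[f] ≤ N_q[G_γ]` where `γ > 0` is such that `m_α[G_γ] = m`. -/
theorem max_entropy_qGaussian
    (n : ℕ) (hn : 0 < n) (α q m γ : ℝ) (hα : 0 < α)
    (hq : (n : ℝ) / ((n : ℝ) + α) < q) (hγ : 0 < γ)
    (hGmom : ellMoment n α (qGaussian n α q γ) = m)
    (f : EuclideanSpace ℝ (Fin n) → ℝ)
    (hnonneg : ∀ x, 0 ≤ f x)
    (hnorm : ∫ x : EuclideanSpace ℝ (Fin n), f x = 1)
    (hmfin : Integrable (fun x : EuclideanSpace ℝ (Fin n) => ‖x‖ ^ α * f x))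
    (hmom : ellMoment n α f = m)
    (hMfin : q ≠ 1 → Integrable (fun x : EuclideanSpace ℝ (Fin n) => f x ^ q))
    (hlogfin : q = 1 → Integrable (fun x : EuclideanSpace ℝ (Fin n) => f x * Real.log (f x))) :
    entPower n q f ≤ entPower n q (qGaussian n α q γ) := by

  have hn' : (0:ℝ) < n := by exact_mod_cast hn
  have hnα : (0:ℝ) < (n:ℝ) + α := by positivity
  have hq0 : 0 < q := lt_trans (div_pos hn' hnα) hq
  have hfint : Integrable f := by
    by_contra h
    rw [integral_undef h] at hnorm; norm_num at hnorm
  have hmomval : ∫ x : EuclideanSpace ℝ (Fin n), ‖x‖ ^ α * f x = m := hmom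
  -- conditions for integrability
  have hc1 : q < 1 → (n : ℝ) < α * 1 / (1 - q) - 0 := by
    intro h1
    have hb := cond_base hn hα hq h1
    have h2 : α * q / (1 - q) ≤ α * 1 / (1 - q) := by
      apply div_le_div_of_nonneg_right ?_ (by linarith) |>.trans_eq rfl
      · nlinarith
    linarith
  have hc2 : q < 1 → (n : ℝ) < α * 1 / (1 - q) - α := by
    intro h1
    have hb := cond_base hn hα hq h1
    have h2 : α * 1 / (1 - q) - α = α * q / (1 - q) := by
      have hne : (1:ℝ) - q ≠ 0 := by linarith
      rw [eq_div_iff hne, sub_mul, div_mul_cancel₀ _ hne]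
      ring
    linarith
  have hc3 : q < 1 → (n : ℝ) < α * q / (1 - q) - 0 := by
    intro h1; have := cond_base hn hα hq h1; linarith
  -- kernel integrabilities
  have hKint : Integrable (fun x : EuclideanSpace ℝ (Fin n) => qGaussKernel n α q γ x) := by
    have h := qgk_integrable_aux hn hα hγ hq 0 1 le_rfl one_pos (fun _ => rfl) hc1
    simpa using h
  have hmomKint : Integrable
      (fun x : EuclideanSpace ℝ (Fin n) => ‖x‖ ^ α * qGaussKernel n α q γ x) := by
    have h := qgk_integrable_aux hn hα hγ hq α 1 hα.le one_pos (fun _ => rfl) hc2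
    simpa using h
  have hZpos : 0 < Zpart n α q γ := by
    have h := integral_qgk_pow_pos hn hα hγ hq 1 one_pos (fun _ => rfl)
      (fun h1 => by have := hc1 h1; linarith)
    rw [Zpart]
    simpa using h
  -- the moment identity J = m * Z
  have hJ : ∫ x : EuclideanSpace ℝ (Fin n), ‖x‖ ^ α * qGaussKernel n α q γ x
      = m * Zpart n α q γ := by
    have h1 : ellMoment n α (qGaussian n α q γ)
        = (∫ x : EuclideanSpace ℝ (Fin n), ‖x‖ ^ α * qGaussKernel n α q γ x)
          / Zpart n α q γ := by
      rw [ellMoment]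
      simp only [qGaussian, ← mul_div_assoc]
      rw [integral_div]
    rw [h1] at hGmom
    rw [div_eq_iff hZpos.ne'] at hGmom
    linarith [hGmom]
  by_cases hq1 : q = 1
  · -- q = 1 : Gibbs argument
    subst hq1
    have hKexp : ∀ x : EuclideanSpace ℝ (Fin n),
        qGaussKernel n α 1 γ x = Real.exp (-(γ * ‖x‖ ^ α)) := by
      intro x; unfold qGaussKernel; rw [if_pos rfl]
    have hflog := hlogfin rfl
    have hGint : Integrable (qGaussian n α 1 γ) := by
      show Integrable (fun x => qGaussKernel n α 1 γ x / Zpart n α 1 γ)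
      exact hKint.div_const _
    have hGmomint : Integrable
        (fun x : EuclideanSpace ℝ (Fin n) => ‖x‖ ^ α * qGaussian n α 1 γ x) := by
      simp only [qGaussian, ← mul_div_assoc]
      exact hmomKint.div_const _
    have hG1 : ∫ x : EuclideanSpace ℝ (Fin n), qGaussian n α 1 γ x = 1 := by
      simp only [qGaussian]
      rw [integral_div, ← Zpart, div_self hZpos.ne']
    have hGmomval : ∫ x : EuclideanSpace ℝ (Fin n), ‖x‖ ^ α * qGaussian n α 1 γ x = m :=
      hGmom
    have hGpos : ∀ x, 0 < qGaussian n α 1 γ x := by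
      intro x
      rw [qGaussian, hKexp x]
      positivity
    have hlg : ∀ x : EuclideanSpace ℝ (Fin n),
        Real.log (qGaussian n α 1 γ x) = -(γ * ‖x‖ ^ α) - Real.log (Zpart n α 1 γ) := by
      intro x
      rw [qGaussian, hKexp x, Real.log_div (Real.exp_ne_zero _) hZpos.ne', Real.log_exp]
    have hGlog : ∀ x : EuclideanSpace ℝ (Fin n),
        qGaussian n α 1 γ x * Real.log (qGaussian n α 1 γ x)
          = -(γ * (‖x‖ ^ α * qGaussian n α 1 γ x))
            - Real.log (Zpart n α 1 γ) * qGaussian n α 1 γ x := by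
      intro x
      rw [hlg x]; ring
    have hGlogint1 : Integrable (fun x : EuclideanSpace ℝ (Fin n) =>
        -(γ * (‖x‖ ^ α * qGaussian n α 1 γ x))
          - Real.log (Zpart n α 1 γ) * qGaussian n α 1 γ x) :=
      ((hGmomint.const_mul γ).neg).sub (hGint.const_mul _)
    have hI1 : Integrable (fun x : EuclideanSpace ℝ (Fin n) =>
        -(γ * (‖x‖ ^ α * qGaussian n α 1 γ x))) := (hGmomint.const_mul γ).neg
    have hI2 : Integrable (fun x : EuclideanSpace ℝ (Fin n) =>
        Real.log (Zpart n α 1 γ) * qGaussian n α 1 γ x) := hGint.const_mul _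
    have hGlogval : ∫ x : EuclideanSpace ℝ (Fin n),
        qGaussian n α 1 γ x * Real.log (qGaussian n α 1 γ x)
          = -(γ * m) - Real.log (Zpart n α 1 γ) := by
      rw [integral_congr_ae (Eventually.of_forall hGlog), integral_sub hI1 hI2,
        integral_neg, integral_const_mul, integral_const_mul, hGmomval, hG1]
      ring
    have hlow : ∀ x : EuclideanSpace ℝ (Fin n),
        (-(γ * (‖x‖ ^ α * f x)) - Real.log (Zpart n α 1 γ) * f x)
          + (f x - qGaussian n α 1 γ x) ≤ f x * Real.log (f x) := by
      intro x
      have h := gibbs_aux (hnonneg x) (hGpos x)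
      rw [hlg x] at h
      nlinarith [h]
    have hJ1 : Integrable (fun x : EuclideanSpace ℝ (Fin n) =>
        -(γ * (‖x‖ ^ α * f x))) := (hmfin.const_mul γ).neg
    have hJ2 : Integrable (fun x : EuclideanSpace ℝ (Fin n) =>
        Real.log (Zpart n α 1 γ) * f x) := hfint.const_mul _
    have hJ3 : Integrable (fun x : EuclideanSpace ℝ (Fin n) =>
        -(γ * (‖x‖ ^ α * f x)) - Real.log (Zpart n α 1 γ) * f x) := hJ1.sub hJ2
    have hJ4 : Integrable (fun x : EuclideanSpace ℝ (Fin n) =>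
        f x - qGaussian n α 1 γ x) := hfint.sub hGint
    have hlowint : Integrable (fun x : EuclideanSpace ℝ (Fin n) =>
        (-(γ * (‖x‖ ^ α * f x)) - Real.log (Zpart n α 1 γ) * f x)
          + (f x - qGaussian n α 1 γ x)) := hJ3.add hJ4
    have hlowval : ∫ x : EuclideanSpace ℝ (Fin n),
        ((-(γ * (‖x‖ ^ α * f x)) - Real.log (Zpart n α 1 γ) * f x)
          + (f x - qGaussian n α 1 γ x)) = -(γ * m) - Real.log (Zpart n α 1 γ) := by
      rw [integral_add hJ3 hJ4, integral_sub hJ1 hJ2, integral_neg,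
        integral_const_mul, integral_sub hfint hGint, integral_const_mul,
        hmomval, hnorm, hG1]
      ring
    have hmono : ∫ x : EuclideanSpace ℝ (Fin n),
        qGaussian n α 1 γ x * Real.log (qGaussian n α 1 γ x)
          ≤ ∫ x : EuclideanSpace ℝ (Fin n), f x * Real.log (f x) := by
      rw [hGlogval, ← hlowval]
      exact integral_mono hlowint hflog hlow
    rw [entPower, entPower, if_pos rfl, if_pos rfl]
    exact Real.exp_le_exp.mpr (neg_le_neg hmono)
  · -- q ≠ 1 : Bernoulli tangent-line argument
    have hKqint : Integrable
        (fun x : EuclideanSpace ℝ (Fin n) => qGaussKernel n α q γ x ^ q) := by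
      have h := qgk_integrable_aux hn hα hγ hq 0 q le_rfl hq0
        (fun h => absurd h hq1) hc3
      simpa using h
    have hIKpos : 0 < ∫ x : EuclideanSpace ℝ (Fin n), qGaussKernel n α q γ x ^ q :=
      integral_qgk_pow_pos hn hα hγ hq q hq0 (fun h => absurd h hq1)
        (fun h1 => by have := hc3 h1; linarith)
    have hIK : ∫ x : EuclideanSpace ℝ (Fin n), qGaussKernel n α q γ x ^ q
        = Zpart n α q γ - (q - 1) * γ * (m * Zpart n α q γ) := by
      have h1 : ∀ x : EuclideanSpace ℝ (Fin n), qGaussKernel n α q γ x ^ q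
          = qGaussKernel n α q γ x - (q - 1) * γ * (‖x‖ ^ α * qGaussKernel n α q γ x) := by
        intro x
        rw [qgk_pow_q hq1 hq0.ne']; ring
      rw [integral_congr_ae (Eventually.of_forall h1),
        integral_sub hKint (hmomKint.const_mul _), integral_const_mul, hJ, Zpart]
    have hZq : (0:ℝ) < (Zpart n α q γ) ^ q := Real.rpow_pos_of_pos hZpos q
    have hIGF : igf n q (qGaussian n α q γ)
        = (∫ x : EuclideanSpace ℝ (Fin n), qGaussKernel n α q γ x ^ q)
          / (Zpart n α q γ) ^ q := by
      rw [igf]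
      have h1 : ∀ x : EuclideanSpace ℝ (Fin n), qGaussian n α q γ x ^ q
          = qGaussKernel n α q γ x ^ q / (Zpart n α q γ) ^ q := by
        intro x
        rw [qGaussian, Real.div_rpow (qgk_nonneg n α q γ x) hZpos.le]
      rw [integral_congr_ae (Eventually.of_forall h1), integral_div]
    have hIGFpos : 0 < igf n q (qGaussian n α q γ) := by
      rw [hIGF]; exact div_pos hIKpos hZq
    -- the comparison function B
    set B : EuclideanSpace ℝ (Fin n) → ℝ := fun x =>
      (1 - q) * (qGaussKernel n α q γ x ^ q / (Zpart n α q γ) ^ q)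
        + q * ((Zpart n α q γ) ^ (1 - q) * (max (1 - (q - 1) * γ * ‖x‖ ^ α) 0 * f x))
      with hB
    -- pointwise rewriting of the tangent expression
    have htang : ∀ x : EuclideanSpace ℝ (Fin n), 0 < qGaussKernel n α q γ x →
        (qGaussKernel n α q γ x / Zpart n α q γ) ^ q
          + q * (qGaussKernel n α q γ x / Zpart n α q γ) ^ (q - 1)
            * (f x - qGaussKernel n α q γ x / Zpart n α q γ) = B x := by
      intro x hKpos
      have hb : 0 < qGaussKernel n α q γ x / Zpart n α q γ := div_pos hKpos hZpos
      have e1 : (qGaussKernel n α q γ x / Zpart n α q γ) ^ q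
          = qGaussKernel n α q γ x ^ q / (Zpart n α q γ) ^ q :=
        Real.div_rpow (qgk_nonneg n α q γ x) hZpos.le q
      have e2 : (qGaussKernel n α q γ x / Zpart n α q γ) ^ (q - 1)
          = max (1 - (q - 1) * γ * ‖x‖ ^ α) 0 * (Zpart n α q γ) ^ (1 - q) := by
        rw [Real.div_rpow (qgk_nonneg n α q γ x) hZpos.le, qgk_pow_qsub1 hq1,
          show (1:ℝ) - q = -(q - 1) by ring, Real.rpow_neg hZpos.le, div_eq_mul_inv]
      have e4 : (qGaussKernel n α q γ x / Zpart n α q γ) ^ (q - 1)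
            * (qGaussKernel n α q γ x / Zpart n α q γ)
          = (qGaussKernel n α q γ x / Zpart n α q γ) ^ q := by
        rw [← Real.rpow_add_one hb.ne' (q - 1), sub_add_cancel]
      simp only [hB]
      linear_combination (-q) * e4 + (1 - q) * e1 + q * f x * e2
    -- integrability of M * f and its integral
    rcases lt_or_gt_of_ne hq1 with hqlt | hqgt
    · -- q < 1
      have hKpos : ∀ x : EuclideanSpace ℝ (Fin n), 0 < qGaussKernel n α q γ x := by
        intro x
        rw [qgk_eq_of_lt_one hγ hqlt]
        have : (0:ℝ) ≤ (1 - q) * γ * ‖x‖ ^ α :=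
          mul_nonneg (mul_nonneg (by linarith) hγ.le) (Real.rpow_nonneg (norm_nonneg x) _)
        apply Real.rpow_pos_of_pos; linarith
      have hMeq : ∀ x : EuclideanSpace ℝ (Fin n),
          max (1 - (q - 1) * γ * ‖x‖ ^ α) 0 * f x
            = f x - (q - 1) * γ * (‖x‖ ^ α * f x) := by
        intro x
        have h0 : (0:ℝ) ≤ (1 - q) * γ * ‖x‖ ^ α :=
          mul_nonneg (mul_nonneg (by linarith) hγ.le) (Real.rpow_nonneg (norm_nonneg x) _)
        rw [max_eq_left (by nlinarith : (0:ℝ) ≤ 1 - (q - 1) * γ * ‖x‖ ^ α)]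
        ring
      have hMfint : Integrable (fun x : EuclideanSpace ℝ (Fin n) =>
          max (1 - (q - 1) * γ * ‖x‖ ^ α) 0 * f x) :=
        (hfint.sub (hmfin.const_mul _)).congr
          (Eventually.of_forall fun x => (hMeq x).symm)
      have hMfval : ∫ x : EuclideanSpace ℝ (Fin n),
          max (1 - (q - 1) * γ * ‖x‖ ^ α) 0 * f x = 1 - (q - 1) * γ * m := by
        rw [integral_congr_ae (Eventually.of_forall hMeq),
          integral_sub hfint (hmfin.const_mul _), integral_const_mul, hnorm, hmomval]
      have hBint : Integrable B := by
        simp only [hB]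
        exact ((hKqint.div_const _).const_mul _).add
          ((hMfint.const_mul _).const_mul _)
      have hBval : ∫ x, B x
          = (1 - q) * ((∫ x : EuclideanSpace ℝ (Fin n), qGaussKernel n α q γ x ^ q)
              / (Zpart n α q γ) ^ q)
            + q * ((Zpart n α q γ) ^ (1 - q) * (1 - (q - 1) * γ * m)) := by
        simp only [hB]
        rw [integral_add ((hKqint.div_const _).const_mul _)
          ((hMfint.const_mul _).const_mul _), integral_const_mul, integral_const_mul,
          integral_const_mul, integral_div, hMfval]
      have hfq_le_B : ∀ x, f x ^ q ≤ B x := by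
        intro x
        have hb : 0 < qGaussKernel n α q γ x / Zpart n α q γ := div_pos (hKpos x) hZpos
        have ht := tangent_le (hnonneg x) hb hq0.le hqlt.le
        rw [htang x (hKpos x)] at ht
        exact ht
      have hfinal : (1 - q) * ((∫ x : EuclideanSpace ℝ (Fin n),
            qGaussKernel n α q γ x ^ q) / (Zpart n α q γ) ^ q)
            + q * ((Zpart n α q γ) ^ (1 - q) * (1 - (q - 1) * γ * m))
          = (∫ x : EuclideanSpace ℝ (Fin n), qGaussKernel n α q γ x ^ q)
              / (Zpart n α q γ) ^ q := by
        have h1 : 1 - (q - 1) * γ * m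
            = (∫ x : EuclideanSpace ℝ (Fin n), qGaussKernel n α q γ x ^ q)
                / Zpart n α q γ := by
          rw [hIK]; field_simp
        rw [h1]
        have h2 : (Zpart n α q γ) ^ ((1:ℝ) - q)
            * ((∫ x : EuclideanSpace ℝ (Fin n), qGaussKernel n α q γ x ^ q)
                / Zpart n α q γ)
            = (∫ x : EuclideanSpace ℝ (Fin n), qGaussKernel n α q γ x ^ q)
                / (Zpart n α q γ) ^ q := by
          rw [Real.rpow_sub hZpos, Real.rpow_one]
          field_simp
        rw [h2]; ring
      have hle : igf n q f ≤ igf n q (qGaussian n α q γ) := by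
        rw [hIGF, igf, ← hfinal, ← hBval]
        exact integral_mono (hMfin hq1) hBint hfq_le_B
      rw [entPower, entPower, if_neg hq1, if_neg hq1]
      apply Real.rpow_le_rpow _ hle (div_nonneg zero_le_one (by linarith))
      rw [igf]
      exact integral_nonneg fun x => Real.rpow_nonneg (hnonneg x) q
    · -- q > 1
      have hMle1 : ∀ x : EuclideanSpace ℝ (Fin n),
          max (1 - (q - 1) * γ * ‖x‖ ^ α) 0 ≤ 1 := by
        intro x
        apply max_le _ zero_le_one
        have h0 : (0:ℝ) ≤ (q - 1) * γ * ‖x‖ ^ α :=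
          mul_nonneg (mul_nonneg (by linarith) hγ.le) (Real.rpow_nonneg (norm_nonneg x) _)
        linarith
      have hMcont : Continuous fun x : EuclideanSpace ℝ (Fin n) =>
          max (1 - (q - 1) * γ * ‖x‖ ^ α) 0 := by
        apply Continuous.max _ continuous_const
        exact continuous_const.sub
          (continuous_const.mul (continuous_norm.rpow_const fun x => Or.inr hα.le))
      have hMfint : Integrable (fun x : EuclideanSpace ℝ (Fin n) =>
          max (1 - (q - 1) * γ * ‖x‖ ^ α) 0 * f x) := by
        apply hfint.mono' (hMcont.aestronglyMeasurable.mul hfint.1)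
        apply Eventually.of_forall
        intro x
        have h0 : (0:ℝ) ≤ max (1 - (q - 1) * γ * ‖x‖ ^ α) 0 * f x :=
          mul_nonneg (le_max_right _ _) (hnonneg x)
        simp only [Pi.mul_apply]
        rw [Real.norm_eq_abs, abs_of_nonneg h0]
        calc max (1 - (q - 1) * γ * ‖x‖ ^ α) 0 * f x ≤ 1 * f x :=
              mul_le_mul_of_nonneg_right (hMle1 x) (hnonneg x)
          _ = f x := one_mul _
      have hMfge : 1 - (q - 1) * γ * m
          ≤ ∫ x : EuclideanSpace ℝ (Fin n),
              max (1 - (q - 1) * γ * ‖x‖ ^ α) 0 * f x := by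
        have hrawint : Integrable (fun x : EuclideanSpace ℝ (Fin n) =>
            f x - (q - 1) * γ * (‖x‖ ^ α * f x)) := hfint.sub (hmfin.const_mul _)
        have hptw : ∀ x : EuclideanSpace ℝ (Fin n),
            f x - (q - 1) * γ * (‖x‖ ^ α * f x)
              ≤ max (1 - (q - 1) * γ * ‖x‖ ^ α) 0 * f x := by
          intro x
          calc f x - (q - 1) * γ * (‖x‖ ^ α * f x)
              = (1 - (q - 1) * γ * ‖x‖ ^ α) * f x := by ring
            _ ≤ max (1 - (q - 1) * γ * ‖x‖ ^ α) 0 * f x :=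
              mul_le_mul_of_nonneg_right (le_max_left _ _) (hnonneg x)
        calc 1 - (q - 1) * γ * m
            = ∫ x : EuclideanSpace ℝ (Fin n), (f x - (q - 1) * γ * (‖x‖ ^ α * f x)) := by
              rw [integral_sub hfint (hmfin.const_mul _), integral_const_mul, hnorm, hmomval]
          _ ≤ _ := integral_mono hrawint hMfint hptw
      have hBint : Integrable B := by
        simp only [hB]
        exact ((hKqint.div_const _).const_mul _).add
          ((hMfint.const_mul _).const_mul _)
      have hBval : ∫ x, B x
          = (1 - q) * ((∫ x : EuclideanSpace ℝ (Fin n), qGaussKernel n α q γ x ^ q)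
              / (Zpart n α q γ) ^ q)
            + q * ((Zpart n α q γ) ^ (1 - q)
              * ∫ x : EuclideanSpace ℝ (Fin n),
                  max (1 - (q - 1) * γ * ‖x‖ ^ α) 0 * f x) := by
        simp only [hB]
        rw [integral_add ((hKqint.div_const _).const_mul _)
          ((hMfint.const_mul _).const_mul _), integral_const_mul, integral_const_mul,
          integral_const_mul, integral_div]
      have hB_le_fq : ∀ x, B x ≤ f x ^ q := by
        intro x
        rcases (qgk_nonneg n α q γ x).eq_or_lt with h0 | hKpos
        · have hM0 : max (1 - (q - 1) * γ * ‖x‖ ^ α) 0 = 0 := by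
            have h2 := qgk_pow_qsub1 (n := n) (α := α) (γ := γ) hq1 x
            rw [← h0, Real.zero_rpow (sub_ne_zero.mpr hq1)] at h2
            exact h2.symm
          have hBx : B x = 0 := by
            simp only [hB]
            simp only [← h0, hM0]
            rw [Real.zero_rpow hq0.ne']
            ring
          rw [hBx]
          exact Real.rpow_nonneg (hnonneg x) q
        · have hb : 0 < qGaussKernel n α q γ x / Zpart n α q γ := div_pos hKpos hZpos
          have ht := tangent_ge (hnonneg x) hb hqgt.le
          rw [htang x hKpos] at ht
          exact ht
      have hfinal : (∫ x : EuclideanSpace ℝ (Fin n), qGaussKernel n α q γ x ^ q)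
              / (Zpart n α q γ) ^ q
          ≤ ∫ x, B x := by
        rw [hBval]
        have h1 : 1 - (q - 1) * γ * m
            = (∫ x : EuclideanSpace ℝ (Fin n), qGaussKernel n α q γ x ^ q)
                / Zpart n α q γ := by
          rw [hIK]; field_simp
        have h2 : (Zpart n α q γ) ^ ((1:ℝ) - q)
            * ((∫ x : EuclideanSpace ℝ (Fin n), qGaussKernel n α q γ x ^ q)
                / Zpart n α q γ)
            = (∫ x : EuclideanSpace ℝ (Fin n), qGaussKernel n α q γ x ^ q)
                / (Zpart n α q γ) ^ q := by
          rw [Real.rpow_sub hZpos, Real.rpow_one]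
          field_simp
        have h3 : (Zpart n α q γ) ^ ((1:ℝ) - q) * (1 - (q - 1) * γ * m)
            ≤ (Zpart n α q γ) ^ ((1:ℝ) - q)
              * ∫ x : EuclideanSpace ℝ (Fin n),
                  max (1 - (q - 1) * γ * ‖x‖ ^ α) 0 * f x :=
          mul_le_mul_of_nonneg_left hMfge (Real.rpow_pos_of_pos hZpos _).le
        have h4 := mul_le_mul_of_nonneg_left h3 hq0.le
        rw [h1, h2] at h4
        linarith
      have hge : igf n q (qGaussian n α q γ) ≤ igf n q f := by
        rw [hIGF, igf]
        calc (∫ x : EuclideanSpace ℝ (Fin n), qGaussKernel n α q γ x ^ q)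
              / (Zpart n α q γ) ^ q ≤ ∫ x, B x := hfinal
          _ ≤ ∫ x : EuclideanSpace ℝ (Fin n), f x ^ q :=
            integral_mono hBint (hMfin hq1) hB_le_fq
      rw [entPower, entPower, if_neg hq1, if_neg hq1]
      exact Real.rpow_le_rpow_of_nonpos hIGFpos hge
        (div_nonpos_of_nonneg_of_nonpos zero_le_one (by linarith))
end
end

section
/- Let α > 1, q > n/(n+α), K > 0, and let f be a radially symmetric probability density on ℝ^n (or on a centered ball) with absolutely continuous radial profile f_r satisfying the first-order nonlinear ODE r^{α-1} f_r(r)^{2-q} = −K f_r'(r) on the interior of its support. Then f is the generalized q-Gaussian G_γ for some γ > 0; i.e., the unique normalized solution of this differential equation is the generalized q-Gaussian. -/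
open MeasureTheory Real Filter
open scoped ENNReal Topology NNReal

noncomputable section

set_option maxHeartbeats 1000000 in
/-- **The unique normalized solution of the differential equation
`r^{α-1} f_r(r)^{2-q} = -K f_r'(r)` is the generalized `q`-Gaussian.**
Let `α > 1`, `q > n/(n+α)`, `K > 0`, and let `f` be a radially symmetric probability
density on `ℝ^n` (possibly supported on a centered ball) with absolutely continuous
radial profile `fr` satisfying the ODE on the interior of its support. Then
`f = G_γ` for some `γ > 0`. -/
theorem ode_solution_is_qGaussian
    (n : ℕ) (hn : 0 < n) (α q K : ℝ) (hα : 1 < α)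
    (hq : (n : ℝ) / ((n : ℝ) + α) < q) (hK : 0 < K)
    (f : EuclideanSpace ℝ (Fin n) → ℝ) (fr : ℝ → ℝ)
    (hrad : ∀ x, f x = fr ‖x‖)
    (hnonneg : ∀ x, 0 ≤ f x)
    (hnorm : ∫ x : EuclideanSpace ℝ (Fin n), f x = 1)
    (hcont : Continuous fr)
    (hdiff : ∀ r : ℝ, 0 < r → 0 < fr r → DifferentiableAt ℝ fr r)
    (hODE : ∀ r : ℝ, 0 < r → 0 < fr r →
      r ^ (α - 1) * fr r ^ (2 - q) = -(K * deriv fr r)) :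
    ∃ γ > (0 : ℝ), f = qGaussian n α q γ := by
  have hα0 : (0:ℝ) < α := lt_trans one_pos hα
  have hαne : α ≠ 0 := ne_of_gt hα0
  have hfr_nonneg : ∀ r : ℝ, 0 ≤ r → 0 ≤ fr r := by
    intro r hr
    have hx : ‖(EuclideanSpace.single (⟨0, hn⟩ : Fin n) r : EuclideanSpace ℝ (Fin n))‖ = r := by
      rw [EuclideanSpace.norm_single, Real.norm_eq_abs]; exact abs_of_nonneg hr
    have := hnonneg (EuclideanSpace.single (⟨0, hn⟩ : Fin n) r)
    rwa [hrad, hx] at this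
  have hderiv_neg : ∀ r : ℝ, 0 < r → 0 < fr r → deriv fr r < 0 := by
    intro r hr hfr
    have h := hODE r hr hfr
    have h1 : 0 < r ^ (α - 1) * fr r ^ (2 - q) :=
      mul_pos (Real.rpow_pos_of_pos hr _) (Real.rpow_pos_of_pos hfr _)
    nlinarith [h1, hK]
  have hprop : ∀ r0 : ℝ, 0 ≤ r0 → 0 < fr r0 → ∀ s, 0 ≤ s → s ≤ r0 → 0 < fr s := by
    intro r0 hr0 hfr0 s hs0 hsr
    by_contra hcon
    push_neg at hcon
    have hs0' : fr s = 0 := le_antisymm hcon (hfr_nonneg s hs0)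
    set Z : Set ℝ := Set.Icc 0 r0 ∩ fr ⁻¹' {0} with hZdef
    have hZcl : IsClosed Z := isClosed_Icc.inter (isClosed_singleton.preimage hcont)
    have hZc : IsCompact Z := isCompact_Icc.of_isClosed_subset hZcl Set.inter_subset_left
    have hZne : Z.Nonempty := ⟨s, ⟨⟨hs0, hsr⟩, hs0'⟩⟩
    obtain ⟨S, hSmem, hSub⟩ : ∃ S, S ∈ Z ∧ ∀ t ∈ Z, t ≤ S :=
      ⟨sSup Z, hZc.sSup_mem hZne, fun t ht => le_csSup hZc.bddAbove ht⟩
    have hfrS : fr S = 0 := hSmem.2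
    have hSr0 : S < r0 :=
      lt_of_le_of_ne hSmem.1.2 (fun heq => hfr0.ne' (heq ▸ hfrS))
    have hpos_gt : ∀ t, S < t → t ≤ r0 → 0 < fr t := by
      intro t h1 h2
      have ht0 : 0 ≤ t := le_trans hSmem.1.1 h1.le
      refine (hfr_nonneg t ht0).lt_of_ne' ?_
      intro h0
      exact absurd (hSub t ⟨⟨ht0, h2⟩, h0⟩) (not_le.2 h1)
    have hanti : StrictAntiOn fr (Set.Icc S r0) := by
      apply strictAntiOn_of_deriv_neg (convex_Icc _ _) hcont.continuousOn
      intro x hx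
      rw [interior_Icc] at hx
      exact hderiv_neg x (lt_of_le_of_lt hSmem.1.1 hx.1) (hpos_gt x hx.1 hx.2.le)
    have := hanti (Set.left_mem_Icc.2 hSr0.le) (Set.right_mem_Icc.2 hSr0.le) hSr0
    rw [hfrS] at this
    exact absurd this (not_lt.2 hfr0.le)
  have hexists : ∃ r, 0 ≤ r ∧ 0 < fr r := by
    by_contra hcon
    push_neg at hcon
    have hf0 : ∀ x : EuclideanSpace ℝ (Fin n), f x = 0 := by
      intro x
      refine le_antisymm ?_ (hnonneg x)
      rw [hrad]; exact hcon _ (norm_nonneg x)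
    have h1 : (1:ℝ) = 0 := by
      rw [← hnorm, show f = fun _ => (0:ℝ) from funext hf0]
      exact integral_zero _ _
    exact one_ne_zero h1
  obtain ⟨r₀, hr₀, hfr₀⟩ := hexists
  have hc : 0 < fr 0 := hprop r₀ hr₀ hfr₀ 0 le_rfl hr₀
  set c := fr 0 with hcdef
  have hcq : 0 < c ^ (q - 1) := Real.rpow_pos_of_pos hc _
  set γ : ℝ := (α * K * c ^ (q - 1))⁻¹ with hγdef
  have hγ : 0 < γ := by rw [hγdef]; positivity
  have hγK : α * K * c ^ (q - 1) * γ = 1 := mul_inv_cancel₀ (by positivity)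
  set kern : ℝ → ℝ := fun r =>
    if q = 1 then Real.exp (-(γ * r ^ α))
    else (max (1 - (q - 1) * γ * r ^ α) 0) ^ ((1:ℝ)/(q-1)) with hkdef
  have hsolve : ∀ r : ℝ, 0 < r → 0 < fr r → fr r = c * kern r := by
    intro r hr hfrr
    have hposIcc : ∀ s ∈ Set.Icc (0:ℝ) r, 0 < fr s := fun s hs => hprop r hr.le hfrr s hs.1 hs.2
    have hcontpow : ContinuousOn (fun t : ℝ => t ^ α) (Set.Icc 0 r) := fun t _ =>
      (Real.continuousAt_rpow_const t α (Or.inr hα0.le)).continuousWithinAt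
    by_cases hq1 : q = 1
    · subst hq1
      have hc0 : c ^ ((1:ℝ) - 1) = 1 := by rw [sub_self, Real.rpow_zero]
      rw [hc0, mul_one] at hγK
      set h : ℝ → ℝ := fun s => Real.log (fr s) + γ * s ^ α with hhdef
      have hderiv : ∀ s ∈ Set.Ioo (0:ℝ) r, HasDerivAt h 0 s := by
        intro s hs
        have hfs : 0 < fr s := hposIcc s ⟨hs.1.le, hs.2.le⟩
        have hd1 : HasDerivAt fr (deriv fr s) s := (hdiff s hs.1 hfs).hasDerivAt
        have hODEs := hODE s hs.1 hfs
        rw [show (2:ℝ) - 1 = 1 by norm_num, Real.rpow_one] at hODEs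
        have h2 : HasDerivAt (fun t => Real.log (fr t)) (deriv fr s / fr s) s := hd1.log hfs.ne'
        have h3 : HasDerivAt (fun t : ℝ => γ * t ^ α) (γ * (α * s ^ (α - 1))) s :=
          (Real.hasDerivAt_rpow_const (Or.inl hs.1.ne')).const_mul γ
        have h4 := h2.add h3
        convert h4 using 1
        case e'_4 => rfl
        case e'_5 => rfl
        case e'_8 => rfl
        have hKd : deriv fr s = -(s ^ (α - 1) * fr s) / K := by
          field_simp
          linarith [hODEs]
        have hγα : γ * (α * s ^ (α - 1)) = s ^ (α - 1) / K := by
          rw [eq_div_iff (ne_of_gt hK)]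
          linear_combination (s ^ (α - 1)) * hγK
        rw [hKd, hγα]
        have e1 : -(s ^ (α - 1) * fr s) / K / fr s = -(s ^ (α - 1) / K) := by
          field_simp
        rw [e1]
        ring
      have hcontOn : ContinuousOn h (Set.Icc 0 r) := by
        apply ContinuousOn.add
        · exact Real.continuousOn_log.comp hcont.continuousOn
            (fun s hs => (hposIcc s hs).ne')
        · exact continuousOn_const.mul hcontpow
      obtain ⟨m, hm, hm0⟩ := exists_hasDerivAt_eq_slope h (fun _ => 0) hr hcontOn hderiv
      have hhr : h r = h 0 := by
        have h5 : (0:ℝ) = (h r - h 0) / (r - 0) := hm0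
        rw [sub_zero] at h5
        field_simp [hr.ne'] at h5
        linarith
      have h0v : h 0 = Real.log c := by
        simp only [hhdef, Real.zero_rpow hαne, mul_zero, add_zero]
        rfl
      rw [h0v] at hhr
      have hlog : Real.log (fr r) = Real.log c + (-(γ * r ^ α)) := by
        simp only [hhdef] at hhr
        linarith
      have hexp := congrArg Real.exp hlog
      rw [Real.exp_log hfrr, Real.exp_add, Real.exp_log hc] at hexp
      rw [hexp]
      have hkval : kern r = Real.exp (-(γ * r ^ α)) := by
        rw [hkdef]
        simp
      rw [hkval]
    · have hq1' : q - 1 ≠ 0 := sub_ne_zero.2 hq1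
      set h : ℝ → ℝ := fun s => fr s ^ (q - 1) + ((q - 1) * γ * c ^ (q - 1)) * s ^ α with hhdef
      have hderiv : ∀ s ∈ Set.Ioo (0:ℝ) r, HasDerivAt h 0 s := by
        intro s hs
        have hfs : 0 < fr s := hposIcc s ⟨hs.1.le, hs.2.le⟩
        have hd1 : HasDerivAt fr (deriv fr s) s := (hdiff s hs.1 hfs).hasDerivAt
        have h2 : HasDerivAt (fun t => fr t ^ (q - 1))
            (deriv fr s * (q - 1) * fr s ^ (q - 1 - 1)) s :=
          hd1.rpow_const (Or.inl hfs.ne')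
        have h3 : HasDerivAt (fun t : ℝ => ((q - 1) * γ * c ^ (q - 1)) * t ^ α)
            (((q - 1) * γ * c ^ (q - 1)) * (α * s ^ (α - 1))) s :=
          (Real.hasDerivAt_rpow_const (Or.inl hs.1.ne')).const_mul _
        have h4 := h2.add h3
        convert h4 using 1
        case e'_4 => rfl
        case e'_5 => rfl
        case e'_8 => rfl
        have hODEs := hODE s hs.1 hfs
        have hKd : deriv fr s = -(s ^ (α - 1) * fr s ^ (2 - q)) / K := by
          field_simp
          linarith [hODEs]
        have hpow : fr s ^ (2 - q) * fr s ^ (q - 1 - 1) = 1 := by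
          rw [← Real.rpow_add hfs, show (2 - q) + (q - 1 - 1) = 0 by ring, Real.rpow_zero]
        rw [hKd]
        have e2 : ((q - 1) * γ * c ^ (q - 1)) * (α * s ^ (α - 1))
            = (q - 1) * s ^ (α - 1) / K := by
          rw [eq_div_iff (ne_of_gt hK)]
          linear_combination ((q - 1) * s ^ (α - 1)) * hγK
        have e1 : -(s ^ (α - 1) * fr s ^ (2 - q)) / K * (q - 1) * fr s ^ (q - 1 - 1)
            = -((q - 1) * s ^ (α - 1) / K) := by
          have e1' : -(s ^ (α - 1) * fr s ^ (2 - q)) / K * (q - 1) * fr s ^ (q - 1 - 1)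
              = -((q - 1) * s ^ (α - 1) * (fr s ^ (2 - q) * fr s ^ (q - 1 - 1)) / K) := by
            ring
          rw [e1', hpow, mul_one]
        rw [e1, e2]
        ring
      have hcontOn : ContinuousOn h (Set.Icc 0 r) := by
        apply ContinuousOn.add
        · intro s hs
          exact ((hcont.continuousAt).rpow_const (Or.inl (hposIcc s hs).ne')).continuousWithinAt
        · exact continuousOn_const.mul hcontpow
      obtain ⟨m, hm, hm0⟩ := exists_hasDerivAt_eq_slope h (fun _ => 0) hr hcontOn hderiv
      have hhr : h r = h 0 := by
        have h5 : (0:ℝ) = (h r - h 0) / (r - 0) := hm0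
        rw [sub_zero] at h5
        field_simp [hr.ne'] at h5
        linarith
      have h0v : h 0 = c ^ (q - 1) := by
        simp only [hhdef, Real.zero_rpow hαne, mul_zero, add_zero]
        rfl
      rw [h0v] at hhr
      have hkey : fr r ^ (q - 1) = c ^ (q - 1) * (1 - (q - 1) * γ * r ^ α) := by
        simp only [hhdef] at hhr
        linear_combination hhr
      have hbase : 0 < 1 - (q - 1) * γ * r ^ α := by
        have hp := Real.rpow_pos_of_pos hfrr (q - 1)
        rw [hkey] at hp
        rcases mul_pos_iff.1 hp with ⟨_, hb⟩ | ⟨hb, _⟩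
        · exact hb
        · exact absurd hcq (not_lt.2 hb.le)
      have hfin : fr r = (fr r ^ (q - 1)) ^ (q - 1)⁻¹ := (Real.rpow_rpow_inv hfrr.le hq1').symm
      rw [hkey, Real.mul_rpow hcq.le hbase.le, Real.rpow_rpow_inv hc.le hq1'] at hfin
      rw [hfin]
      have hkval : kern r = (1 - (q - 1) * γ * r ^ α) ^ ((1:ℝ)/(q - 1)) := by
        rw [hkdef]
        simp only [if_neg hq1]
        rw [max_eq_left hbase.le]
      rw [hkval, one_div]
  have hzero : ∀ r : ℝ, 0 < r → fr r = 0 → kern r = 0 := by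
    intro r0 hr0 hfr0
    by_contra hker
    set Z : Set ℝ := Set.Icc 0 r0 ∩ fr ⁻¹' {0} with hZdef
    have hZcl : IsClosed Z := isClosed_Icc.inter (isClosed_singleton.preimage hcont)
    have hZc : IsCompact Z := isCompact_Icc.of_isClosed_subset hZcl Set.inter_subset_left
    have hZne : Z.Nonempty := ⟨r0, ⟨⟨hr0.le, le_rfl⟩, hfr0⟩⟩
    obtain ⟨R, hRmem, hRlb⟩ : ∃ R, R ∈ Z ∧ ∀ t ∈ Z, R ≤ t :=
      ⟨sInf Z, hZc.sInf_mem hZne, fun t ht => csInf_le hZc.bddBelow ht⟩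
    have hfrR : fr R = 0 := hRmem.2
    have hRr0 : R ≤ r0 := hRmem.1.2
    have hR0 : 0 < R := by
      rcases hRmem.1.1.lt_or_eq with hlt | heq
      · exact hlt
      · exfalso
        have h0 : fr 0 = 0 := by nth_rewrite 1 [heq]; exact hfrR
        exact absurd h0 (by rw [← hcdef]; exact hc.ne')
    have hposbelow : ∀ t, 0 ≤ t → t < R → 0 < fr t := by
      intro t ht htR
      refine (hfr_nonneg t ht).lt_of_ne' ?_
      intro h0
      exact absurd (hRlb t ⟨⟨ht, le_trans htR.le hRr0⟩, h0⟩) (not_le.2 htR)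
    have hbpos : q ≠ 1 → ∀ t, 0 ≤ t → t ≤ r0 → 0 < 1 - (q - 1) * γ * t ^ α := by
      intro hq1 t ht htr
      have hbr0 : 0 < 1 - (q - 1) * γ * r0 ^ α := by
        by_contra hle
        push_neg at hle
        have hmax : max (1 - (q - 1) * γ * r0 ^ α) 0 = 0 := max_eq_right hle
        apply hker
        rw [hkdef]
        simp only [if_neg hq1, hmax]
        exact Real.zero_rpow (one_div_ne_zero (sub_ne_zero.2 hq1))
      have htα : t ^ α ≤ r0 ^ α := Real.rpow_le_rpow ht htr hα0.le
      have htα0 : 0 ≤ t ^ α := Real.rpow_nonneg ht α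
      rcases lt_or_gt_of_ne hq1 with hqlt | hqgt
      · have := mul_nonneg (mul_nonneg (by linarith : (0:ℝ) ≤ 1 - q) hγ.le) htα0
        nlinarith [this]
      · have := mul_le_mul_of_nonneg_left htα
          (mul_nonneg (by linarith : (0:ℝ) ≤ q - 1) hγ.le)
        nlinarith [this, hbr0]
    have hm : 0 < kern R := by
      rw [hkdef]
      by_cases hq1 : q = 1
      · simp only [if_pos hq1]; exact Real.exp_pos _
      · simp only [if_neg hq1]
        have hb := hbpos hq1 R hR0.le hRr0
        rw [max_eq_left hb.le]
        exact Real.rpow_pos_of_pos hb _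
    have hmono : ∀ t, 0 < t → t < R → kern R ≤ kern t := by
      intro t ht htR
      have htα : t ^ α ≤ R ^ α := Real.rpow_le_rpow ht.le htR.le hα0.le
      rw [hkdef]
      by_cases hq1 : q = 1
      · simp only [if_pos hq1]
        apply Real.exp_le_exp.2
        have := mul_le_mul_of_nonneg_left htα hγ.le
        linarith
      · simp only [if_neg hq1]
        have hbt := hbpos hq1 t ht.le (le_trans htR.le hRr0)
        have hbR := hbpos hq1 R hR0.le hRr0
        rw [max_eq_left hbt.le, max_eq_left hbR.le]
        rcases lt_or_gt_of_ne hq1 with hqlt | hqgt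
        · have hble : 1 - (q - 1) * γ * t ^ α ≤ 1 - (q - 1) * γ * R ^ α := by
            have := mul_le_mul_of_nonpos_left htα
              (by nlinarith [hγ] : (q - 1) * γ ≤ 0)
            nlinarith [this]
          exact Real.rpow_le_rpow_of_nonpos hbt hble
            (le_of_lt (div_neg_of_pos_of_neg one_pos (sub_neg.2 hqlt)))
        · have hble : 1 - (q - 1) * γ * R ^ α ≤ 1 - (q - 1) * γ * t ^ α := by
            have := mul_le_mul_of_nonneg_left htα
              (mul_nonneg (by linarith : (0:ℝ) ≤ q - 1) hγ.le)
            nlinarith [this]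
          exact Real.rpow_le_rpow hbR.le hble
            (le_of_lt (div_pos one_pos (sub_pos.2 hqgt)))
    have hNB : (𝓝[Set.Ioo (0:ℝ) R] R).NeBot := by
      rw [← mem_closure_iff_nhdsWithin_neBot, closure_Ioo hR0.ne]
      exact ⟨hR0.le, le_rfl⟩
    have htend : Filter.Tendsto fr (𝓝[Set.Ioo (0:ℝ) R] R) (𝓝 (fr R)) :=
      (hcont.continuousAt.tendsto).mono_left nhdsWithin_le_nhds
    have hge : c * kern R ≤ fr R := by
      apply ge_of_tendsto htend
      filter_upwards [self_mem_nhdsWithin] with t htm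
      rw [hsolve t htm.1 (hposbelow t htm.1.le htm.2)]
      exact mul_le_mul_of_nonneg_left (hmono t htm.1 htm.2) hc.le
    rw [hfrR] at hge
    nlinarith [mul_pos hc hm]
  have hpt : ∀ r : ℝ, 0 ≤ r → fr r = c * kern r := by
    intro r hr
    rcases hr.lt_or_eq with hlt | heq
    · rcases (hfr_nonneg r hr).lt_or_eq with hp | hp
      · exact hsolve r hlt hp
      · rw [← hp, hzero r hlt hp.symm, mul_zero]
    · rw [← heq]
      have hk0 : kern 0 = 1 := by
        rw [hkdef]
        by_cases hq1 : q = 1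
        · simp only [if_pos hq1, Real.zero_rpow hαne, mul_zero, neg_zero, Real.exp_zero]
        · simp only [if_neg hq1, Real.zero_rpow hαne, mul_zero, sub_zero]
          rw [max_eq_left zero_le_one, Real.one_rpow]
      rw [hk0, mul_one]
  refine ⟨γ, hγ, ?_⟩
  have hfk : ∀ x : EuclideanSpace ℝ (Fin n), f x = c * qGaussKernel n α q γ x := by
    intro x
    rw [hrad, hpt ‖x‖ (norm_nonneg x), hkdef]
    rfl
  have hZp : Zpart n α q γ = 1 / c := by
    have h1 : Zpart n α q γ = ∫ x : EuclideanSpace ℝ (Fin n), f x / c := by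
      unfold Zpart
      congr 1
      funext x
      rw [hfk x]
      field_simp
    rw [h1, MeasureTheory.integral_div, hnorm]
  funext x
  rw [hfk x]
  unfold qGaussian
  rw [hZp, ← hfk x, hfk x, div_div_eq_mul_div, div_one]
  ring
end
end

section
/- For α, β > 1 Hölder conjugates, γ > 0 and q in the range where the quantities are finite, the generalized (β,q)-Fisher information of the generalized q-Gaussian G_γ on ℝ^n equals I_{β,q}[G_γ] = (αγ)^β · μ_{α,1} / (μ_{0,1})^{β(q−1)+1}, where μ_{p,ν} = ∫_{ℝ^n} |x|^p (1 − (q−1)γ|x|^α)_+^{ν/(q−1)} dx for q ≠ 1 (and μ_{p,ν} = ∫ |x|^p exp(−νγ|x|^α) dx for q = 1). In particular Z(γ) = μ_{0,1}. -/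
open MeasureTheory Real Filter
open scoped ENNReal Topology NNReal

noncomputable section

/-- `μ_{p,ν} = ∫_{ℝ^n} |x|^p (1 - (q-1)γ|x|^α)_+^{ν/(q-1)} dx` for `q ≠ 1`
(and `∫ |x|^p exp(-νγ|x|^α) dx` for `q = 1`). -/
def muQ (n : ℕ) (α q γ p ν : ℝ) : ℝ :=
  if q = 1 then ∫ x : EuclideanSpace ℝ (Fin n), ‖x‖ ^ p * Real.exp (-(ν * γ * ‖x‖ ^ α))
  else ∫ x : EuclideanSpace ℝ (Fin n),
    ‖x‖ ^ p * (max (1 - (q - 1) * γ * ‖x‖ ^ α) 0) ^ (ν / (q - 1))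

private lemma cont_base {n : ℕ} (c α : ℝ) (hα : 0 < α) :
    Continuous fun y : EuclideanSpace ℝ (Fin n) => 1 - c * ‖y‖ ^ α :=
  continuous_const.sub (continuous_const.mul
    (continuous_norm.rpow_const fun _ => Or.inr hα.le))

private lemma qg_deriv_pos {n : ℕ} {α γ q : ℝ} (hα : 1 < α) (hq1 : q ≠ 1)
    {x : EuclideanSpace ℝ (Fin n)} (hγ : 0 < γ)
    (hpos : 0 < 1 - (q - 1) * γ * ‖x‖ ^ α) :
    ∃ D : EuclideanSpace ℝ (Fin n) →L[ℝ] ℝ, HasFDerivAt (qGaussKernel n α q γ) D x ∧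
      ‖D‖ = γ * α * ‖x‖ ^ (α - 1) * (1 - (q - 1) * γ * ‖x‖ ^ α) ^ ((1:ℝ) / (q - 1) - 1) := by
  have hq0 : q - 1 ≠ 0 := sub_ne_zero.mpr hq1
  have hL : HasFDerivAt (fun y : EuclideanSpace ℝ (Fin n) => ‖y‖ ^ α)
      ((α * ‖x‖ ^ (α - 2)) • innerSL ℝ x) x := hasFDerivAt_norm_rpow x hα
  have h1 : HasDerivAt (fun s : ℝ => 1 - (q - 1) * γ * s) (-((q - 1) * γ)) (‖x‖ ^ α) := by
    have := ((hasDerivAt_id (‖x‖ ^ α)).const_mul ((q - 1) * γ)).const_sub 1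
    simpa only [id_eq, mul_one] using this
  have hw : HasDerivAt (fun s : ℝ => (1 - (q - 1) * γ * s) ^ ((1:ℝ) / (q - 1)))
      ((-((q - 1) * γ)) * ((1:ℝ) / (q - 1)) *
        (1 - (q - 1) * γ * ‖x‖ ^ α) ^ ((1:ℝ) / (q - 1) - 1)) (‖x‖ ^ α) :=
    h1.rpow_const (Or.inl hpos.ne')
  have hK : HasFDerivAt (qGaussKernel n α q γ)
      (((-((q - 1) * γ)) * ((1:ℝ) / (q - 1)) *
        (1 - (q - 1) * γ * ‖x‖ ^ α) ^ ((1:ℝ) / (q - 1) - 1)) •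
        ((α * ‖x‖ ^ (α - 2)) • innerSL ℝ x)) x := by
    refine (hw.comp_hasFDerivAt x hL).congr_of_eventuallyEq ?_
    have hev : ∀ᶠ y in 𝓝 x, 0 < 1 - (q - 1) * γ * ‖y‖ ^ α :=
      continuousAt_const.eventually_lt ((cont_base ((q-1)*γ) α (by linarith)).continuousAt) hpos
    filter_upwards [hev] with y hy
    simp only [qGaussKernel, if_neg hq1, max_eq_left hy.le, Function.comp]
  refine ⟨_, hK, ?_⟩
  have hLn : ‖(α * ‖x‖ ^ (α - 2)) • innerSL ℝ x‖ = α * ‖x‖ ^ (α - 1) := by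
    have := norm_fderiv_norm_id_rpow x hα
    rwa [fderiv_norm_rpow x hα] at this
  rw [norm_smul _ ((α * ‖x‖ ^ (α - 2)) • innerSL ℝ x), hLn, Real.norm_eq_abs, abs_mul]
  have h2 : -((q - 1) * γ) * ((1:ℝ) / (q - 1)) = -γ := by field_simp
  rw [h2, abs_neg, abs_of_pos hγ, abs_of_pos (Real.rpow_pos_of_pos hpos _)]
  ring

private lemma qg_deriv_exp {n : ℕ} {α γ : ℝ} (hα : 1 < α) (hγ : 0 < γ)
    (x : EuclideanSpace ℝ (Fin n)) :
    ∃ D : EuclideanSpace ℝ (Fin n) →L[ℝ] ℝ, HasFDerivAt (qGaussKernel n α 1 γ) D x ∧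
      ‖D‖ = γ * α * ‖x‖ ^ (α - 1) * Real.exp (-(γ * ‖x‖ ^ α)) := by
  have hL : HasFDerivAt (fun y : EuclideanSpace ℝ (Fin n) => ‖y‖ ^ α)
      ((α * ‖x‖ ^ (α - 2)) • innerSL ℝ x) x := hasFDerivAt_norm_rpow x hα
  have h0 : HasDerivAt (fun s : ℝ => -(γ * s)) (-γ) (‖x‖ ^ α) := by
    simpa only [id_eq, mul_one, Pi.neg_def] using ((hasDerivAt_id (‖x‖ ^ α)).const_mul γ).neg
  have h1 : HasDerivAt (fun s : ℝ => Real.exp (-(γ * s)))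
      (Real.exp (-(γ * ‖x‖ ^ α)) * (-γ)) (‖x‖ ^ α) := h0.exp
  have hfun : qGaussKernel n α 1 γ
      = fun y : EuclideanSpace ℝ (Fin n) => Real.exp (-(γ * ‖y‖ ^ α)) := by
    funext y; simp [qGaussKernel]
  refine ⟨_, by rw [hfun]; exact h1.comp_hasFDerivAt x hL, ?_⟩
  have hLn : ‖(α * ‖x‖ ^ (α - 2)) • innerSL ℝ x‖ = α * ‖x‖ ^ (α - 1) := by
    have := norm_fderiv_norm_id_rpow x hα
    rwa [fderiv_norm_rpow x hα] at this
  rw [norm_smul _ ((α * ‖x‖ ^ (α - 2)) • innerSL ℝ x), hLn, Real.norm_eq_abs, abs_mul,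
    abs_of_pos (Real.exp_pos _), abs_neg, abs_of_pos hγ]
  ring

private lemma qg_zero_near {n : ℕ} {α γ q : ℝ} (hα : 0 < α) (hq1 : q ≠ 1)
    {x : EuclideanSpace ℝ (Fin n)} (hneg : 1 - (q - 1) * γ * ‖x‖ ^ α < 0) :
    fderiv ℝ (qGaussian n α q γ) x = 0 ∧ qGaussKernel n α q γ x = 0 := by
  have hq0 : q - 1 ≠ 0 := sub_ne_zero.mpr hq1
  have hev : ∀ᶠ y in 𝓝 x, 1 - (q - 1) * γ * ‖y‖ ^ α < 0 :=
    ((cont_base ((q - 1) * γ) α hα).continuousAt).eventually_lt continuousAt_const hneg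
  have hzero : qGaussian n α q γ =ᶠ[𝓝 x] fun _ => (0 : ℝ) := by
    filter_upwards [hev] with y hy
    simp [qGaussian, qGaussKernel, if_neg hq1, max_eq_right hy.le,
      Real.zero_rpow (one_div_ne_zero hq0), Real.zero_rpow (inv_ne_zero hq0)]
  refine ⟨?_, ?_⟩
  · rw [hzero.fderiv_eq]; exact fderiv_const_apply 0
  · simp [qGaussKernel, if_neg hq1, max_eq_right hneg.le,
      Real.zero_rpow (one_div_ne_zero hq0), Real.zero_rpow (inv_ne_zero hq0)]

/-- **The generalized `(β,q)`-Fisher information of the generalized `q`-Gaussian**: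
for `α, β > 1` Hölder conjugates, `γ > 0` and `q` in the range where the involved
quantities are finite,
`I_{β,q}[G_γ] = (αγ)^β μ_{α,1} / (μ_{0,1})^{β(q-1)+1}`; in particular `Z(γ) = μ_{0,1}`. -/
theorem genFisher_qGaussian
    (n : ℕ) (hn : 0 < n) (α β γ q : ℝ) (hα : 1 < α) (hβ : 1 < β)
    (hconj : 1 / α + 1 / β = 1) (hγ : 0 < γ)
    (hq : max (1 - α) ((n : ℝ) / ((n : ℝ) + α)) < q) :
    genFisher n β q (qGaussian n α q γ)
      = (α * γ) ^ β * muQ n α q γ α 1 / (muQ n α q γ 0 1) ^ (β * (q - 1) + 1)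
    ∧ Zpart n α q γ = muQ n α q γ 0 1 := by
  have hα0 : (0:ℝ) < α := by linarith
  have hβ0 : β ≠ 0 := by positivity
  have hβα : β * (α - 1) = α := by
    have hαne : α ≠ 0 := by positivity
    have hβne : β ≠ 0 := hβ0
    field_simp at hconj
    linarith [hconj]
  have part2 : Zpart n α q γ = muQ n α q γ 0 1 := by
    by_cases hq1 : q = 1
    · subst hq1
      unfold Zpart muQ qGaussKernel
      rw [if_pos rfl]
      apply integral_congr_ae
      filter_upwards with x
      rw [if_pos rfl, Real.rpow_zero, one_mul, one_mul]
    · unfold Zpart muQ qGaussKernel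
      rw [if_neg hq1]
      apply integral_congr_ae
      filter_upwards with x
      rw [if_neg hq1, Real.rpow_zero, one_mul]
  refine ⟨?_, part2⟩
  have hKnn : ∀ y, 0 ≤ qGaussKernel n α q γ y := fun y => by
    unfold qGaussKernel
    split
    · exact (Real.exp_pos _).le
    · exact Real.rpow_nonneg (le_max_right _ _) _
  have hZnn : 0 ≤ Zpart n α q γ := integral_nonneg hKnn
  by_cases hZ0 : Zpart n α q γ = 0
  · -- degenerate case: kernel not integrable, everything is junk 0
    have hG0 : qGaussian n α q γ = fun _ => (0:ℝ) := funext fun y => by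
      simp [qGaussian, hZ0]
    have hLHS : genFisher n β q (qGaussian n α q γ) = 0 := by
      rw [hG0]
      unfold genFisher
      have hz : ∀ x : EuclideanSpace ℝ (Fin n),
          (0:ℝ) ^ (β * (q - 1) + 1) *
            (‖fderiv ℝ (fun _ : EuclideanSpace ℝ (Fin n) => (0:ℝ)) x‖ / (0:ℝ)) ^ β = 0 :=
        fun x => by
          rw [fderiv_const_apply 0]
          simp [Real.zero_rpow hβ0]
      simp only [hz, integral_zero]
    rw [hLHS, ← part2, hZ0]
    by_cases he : β * (q - 1) + 1 = 0
    · rw [he, Real.rpow_zero, div_one]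
      have hq1 : q ≠ 1 := by
        intro h; rw [h] at he; norm_num at he
      have hq0 : q - 1 ≠ 0 := sub_ne_zero.mpr hq1
      have hqlt : q - 1 < 0 := by nlinarith [he]
      suffices hmu : muQ n α q γ α 1 = 0 by rw [hmu, mul_zero]
      unfold muQ
      rw [if_neg hq1]
      apply integral_undef
      intro hint
      set c := (q - 1) * γ with hc
      have hbase : ∀ y : EuclideanSpace ℝ (Fin n), (1:ℝ) ≤ 1 - c * ‖y‖ ^ α := fun y => by
        have h1 : c ≤ 0 := (mul_nonpos_iff.mpr (Or.inr ⟨hqlt.le, hγ.le⟩))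
        have h2 : c * ‖y‖ ^ α ≤ 0 :=
          mul_nonpos_of_nonpos_of_nonneg h1 (Real.rpow_nonneg (norm_nonneg y) α)
        linarith
      set K : EuclideanSpace ℝ (Fin n) → ℝ :=
        fun y => (max (1 - c * ‖y‖ ^ α) 0) ^ ((1:ℝ) / (q - 1)) with hK
      have hKeq : K = fun y => (1 - c * ‖y‖ ^ α) ^ ((1:ℝ) / (q - 1)) := by
        funext y
        rw [hK]
        simp only [max_eq_left (by linarith [hbase y] : (0:ℝ) ≤ 1 - c * ‖y‖ ^ α)]
      have hKpos : ∀ y, 0 < K y := fun y => by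
        rw [hKeq]
        exact Real.rpow_pos_of_pos (by linarith [hbase y]) _
      have hKcont : Continuous K := by
        rw [hKeq]
        exact (cont_base c α hα0).rpow_const fun y => Or.inl (by linarith [hbase y])
      have hI1 : IntegrableOn K (Metric.closedBall (0:EuclideanSpace ℝ (Fin n)) 1) volume :=
        hKcont.continuousOn.integrableOn_compact (isCompact_closedBall _ _)
      have hI2 : IntegrableOn K (Metric.closedBall (0:EuclideanSpace ℝ (Fin n)) 1)ᶜ volume := by
        refine Integrable.mono (hint.integrableOn)
          (hKcont.aestronglyMeasurable.restrict) ?_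
        rw [ae_restrict_iff' measurableSet_closedBall.compl]
        refine Eventually.of_forall fun y hy => ?_
        have hy1 : 1 < ‖y‖ := by
          simpa [Metric.mem_closedBall, dist_zero_right] using hy
        have h1K : 1 ≤ ‖y‖ ^ α := Real.one_le_rpow hy1.le hα0.le
        rw [Real.norm_eq_abs, Real.norm_eq_abs, abs_of_pos (hKpos y),
          abs_of_pos (mul_pos (lt_of_lt_of_le one_pos h1K) (hKpos y))]
        exact le_mul_of_one_le_left (hKpos y).le h1K
      have hKint : Integrable K (volume : Measure (EuclideanSpace ℝ (Fin n))) := by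
        have := hI1.union hI2
        rwa [Set.union_compl_self, integrableOn_univ] at this
      have hpos : 0 < ∫ y, K y := by
        refine (integral_pos_iff_support_of_nonneg (fun y => (hKpos y).le) hKint).2 ?_
        have hsupp : Function.support K = Set.univ :=
          Set.eq_univ_of_forall fun y => (hKpos y).ne'
        rw [hsupp]
        exact isOpen_univ.measure_pos volume ⟨0, trivial⟩
      have : Zpart n α q γ = ∫ y, K y := by
        unfold Zpart qGaussKernel
        rw [hK]
        simp only [if_neg hq1]
        rfl
      rw [this] at hZ0
      exact absurd hZ0 hpos.ne'
    · rw [Real.zero_rpow he, div_zero]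
  · -- non-degenerate case
    have hZpos : 0 < Zpart n α q γ := lt_of_le_of_ne hZnn (Ne.symm hZ0)
    by_cases hq1 : q = 1
    · subst hq1
      have key : ∀ x : EuclideanSpace ℝ (Fin n),
          qGaussian n α 1 γ x ^ (β * (1 - 1) + 1) *
            (‖fderiv ℝ (qGaussian n α 1 γ) x‖ / qGaussian n α 1 γ x) ^ β
          = ((α * γ) ^ β / Zpart n α 1 γ ^ (β * (1 - 1) + 1)) *
            (‖x‖ ^ α * Real.exp (-(1 * γ * ‖x‖ ^ α))) := by
        intro x
        obtain ⟨D, hD, hDn⟩ := qg_deriv_exp (n := n) hα hγ x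
        have hGfun : qGaussian n α 1 γ
            = fun y => (Zpart n α 1 γ)⁻¹ * qGaussKernel n α 1 γ y :=
          funext fun y => div_eq_inv_mul _ _
        have hGder : HasFDerivAt (qGaussian n α 1 γ) ((Zpart n α 1 γ)⁻¹ • D) x := by
          rw [hGfun]; exact hD.const_mul _
        rw [hGder.fderiv, norm_smul, norm_inv, Real.norm_eq_abs, abs_of_pos hZpos, hDn]
        have he1 : β * ((1:ℝ) - 1) + 1 = 1 := by ring
        rw [he1, Real.rpow_one, Real.rpow_one]
        unfold qGaussian qGaussKernel
        rw [if_pos rfl]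
        have hKx : (0:ℝ) < Real.exp (-(γ * ‖x‖ ^ α)) := Real.exp_pos _
        have h3 : (Zpart n α 1 γ)⁻¹ * (γ * α * ‖x‖ ^ (α - 1) * Real.exp (-(γ * ‖x‖ ^ α))) /
            (Real.exp (-(γ * ‖x‖ ^ α)) / Zpart n α 1 γ) = γ * α * ‖x‖ ^ (α - 1) := by
          field_simp
        rw [h3]
        rw [Real.mul_rpow (by positivity) (Real.rpow_nonneg (norm_nonneg x) _),
          Real.mul_rpow hγ.le hα0.le, ← Real.rpow_mul (norm_nonneg x),
          show (α - 1) * β = α by linarith [hβα], one_mul,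
          Real.mul_rpow hα0.le hγ.le]
        ring
      unfold genFisher
      rw [integral_congr_ae (Eventually.of_forall key), integral_const_mul, ← part2]
      have hmu : muQ n α 1 γ α 1
          = ∫ x : EuclideanSpace ℝ (Fin n), ‖x‖ ^ α * Real.exp (-(1 * γ * ‖x‖ ^ α)) := by
        unfold muQ; rw [if_pos rfl]
      rw [hmu, div_mul_eq_mul_div]
    · -- q ≠ 1
      have hq0 : q - 1 ≠ 0 := sub_ne_zero.mpr hq1
      haveI : NeZero n := ⟨hn.ne'⟩
      set r₀ : ℝ := (((q - 1) * γ)⁻¹) ^ α⁻¹ with hr₀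
      have hsph : volume (Metric.sphere (0 : EuclideanSpace ℝ (Fin n)) r₀) = 0 :=
        Measure.addHaar_sphere volume 0 r₀
      have hae : ∀ᵐ x : EuclideanSpace ℝ (Fin n), 1 - (q - 1) * γ * ‖x‖ ^ α ≠ 0 := by
        rw [ae_iff]
        refine measure_mono_null (fun x hx => ?_) hsph
        simp only [Set.mem_setOf_eq, not_not] at hx
        have hcne : (q - 1) * γ ≠ 0 := mul_ne_zero hq0 hγ.ne'
        have h1 : ‖x‖ ^ α = ((q - 1) * γ)⁻¹ := by
          field_simp
          linarith
        have h2 : ‖x‖ = r₀ := by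
          rw [hr₀, ← h1, Real.rpow_rpow_inv (norm_nonneg x) (ne_of_gt hα0)]
        simpa [mem_sphere_zero_iff_norm] using h2
      have key : ∀ᵐ x : EuclideanSpace ℝ (Fin n),
          qGaussian n α q γ x ^ (β * (q - 1) + 1) *
            (‖fderiv ℝ (qGaussian n α q γ) x‖ / qGaussian n α q γ x) ^ β
          = ((α * γ) ^ β / Zpart n α q γ ^ (β * (q - 1) + 1)) *
            (‖x‖ ^ α * (max (1 - (q - 1) * γ * ‖x‖ ^ α) 0) ^ ((1:ℝ) / (q - 1))) := by
        filter_upwards [hae] with x hu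
        rcases hu.lt_or_gt with hneg | hpos
        · obtain ⟨hfder, hKx⟩ := qg_zero_near hα0 hq1 hneg
          have hGx : qGaussian n α q γ x = 0 := by
            unfold qGaussian; rw [hKx, zero_div]
          rw [hfder, hGx, max_eq_right hneg.le,
            Real.zero_rpow (one_div_ne_zero hq0)]
          simp [Real.zero_rpow hβ0]
        · obtain ⟨D, hD, hDn⟩ := qg_deriv_pos (n := n) hα hq1 hγ hpos
          have hGfun : qGaussian n α q γ
              = fun y => (Zpart n α q γ)⁻¹ * qGaussKernel n α q γ y :=
            funext fun y => div_eq_inv_mul _ _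
          have hGder : HasFDerivAt (qGaussian n α q γ) ((Zpart n α q γ)⁻¹ • D) x := by
            rw [hGfun]; exact hD.const_mul _
          rw [hGder.fderiv, norm_smul, norm_inv, Real.norm_eq_abs, abs_of_pos hZpos, hDn]
          have hGx : qGaussian n α q γ x
              = (1 - (q - 1) * γ * ‖x‖ ^ α) ^ ((1:ℝ) / (q - 1)) / Zpart n α q γ := by
            unfold qGaussian qGaussKernel
            rw [if_neg hq1, max_eq_left hpos.le]
          rw [hGx, max_eq_left hpos.le]
          set t : ℝ := ‖x‖ with ht
          set u : ℝ := 1 - (q - 1) * γ * t ^ α with hudef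
          set θ : ℝ := (1:ℝ) / (q - 1) with hθdef
          set Z : ℝ := Zpart n α q γ with hZdef
          set e : ℝ := β * (q - 1) + 1 with hedef
          have huθ : (0:ℝ) < u ^ θ := Real.rpow_pos_of_pos hpos θ
          have h3 : Z⁻¹ * (γ * α * t ^ (α - 1) * u ^ (θ - 1)) / (u ^ θ / Z)
              = γ * α * t ^ (α - 1) * (u ^ (θ - 1) / u ^ θ) := by
            field_simp
          have h4 : u ^ (θ - 1) / u ^ θ = u⁻¹ := by
            rw [← Real.rpow_sub hpos, show θ - 1 - θ = (-1:ℝ) by ring, Real.rpow_neg_one]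
          rw [h3, h4]
          rw [Real.div_rpow (Real.rpow_nonneg hpos.le θ) hZnn]
          rw [← Real.rpow_mul hpos.le]
          rw [Real.mul_rpow (by positivity) (inv_nonneg.mpr hpos.le),
            Real.mul_rpow (by positivity) (Real.rpow_nonneg (norm_nonneg x) _),
            Real.mul_rpow hγ.le hα0.le,
            ← Real.rpow_mul (norm_nonneg x),
            show (α - 1) * β = α by linarith [hβα],
            ← Real.rpow_neg_one u, ← Real.rpow_mul hpos.le]
          have hθq : θ * (q - 1) = 1 := one_div_mul_cancel hq0
          have h5 : u ^ (θ * e) * u ^ ((-1) * β) = u ^ θ := by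
            rw [← Real.rpow_add hpos]
            congr 1
            rw [hedef]
            linear_combination β * hθq
          rw [Real.mul_rpow hα0.le hγ.le, ← h5]
          ring
      unfold genFisher
      rw [integral_congr_ae key, integral_const_mul, ← part2]
      have hmu : muQ n α q γ α 1 = ∫ x : EuclideanSpace ℝ (Fin n),
          ‖x‖ ^ α * (max (1 - (q - 1) * γ * ‖x‖ ^ α) 0) ^ ((1:ℝ) / (q - 1)) := by
        unfold muQ; rw [if_neg hq1]
      rw [hmu, div_mul_eq_mul_div]
end
end
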